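/- arXiv:2011.11477 — 3 statements merged into one kernel-verified Lean document; each statement's English description precedes it below -/
import Mathlib

section
/- Let X ∈ ℝ^{n×p}, let β ∈ ℝ^p, and let C_xx ∈ ℝ^{p×p} be symmetric positive semidefinite. Suppose the rows of X are fixed, Y = Xβ + ε with ε ~ N(0, σ²I_n), and the test pair is (x*, y*) with x* ~ N(0, C_xx), y* = x*ᵀβ + ε*, ε* ~ N(0, σ²), all independent. Let β̂ = X_{PCA,k}^† Y be the PCA-OLS estimator. Then the risk satisfies E_{Y,x*,y*}[(x*ᵀβ̂ − y*)² | X] = βᵀΠ_k^⊥ C_xx Π_k^⊥ β + (σ²/n)·tr(((1/n)X_{PCA,k}ᵀX_{PCA,k})^† C_xx) + σ². -/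
/- STATEMENT 0: Risk decomposition for PCA-OLS. With X ∈ ℝ^{n×p} fixed, Y = Xβ + ε,
ε ~ N(0,σ²Iₙ), test point x* ~ N(0,C_xx), y* = x*ᵀβ + ε*, ε* ~ N(0,σ²), all independent,
and β̂ = X_{PCA,k}^† Y, one has
E[(x*ᵀβ̂ − y*)²|X] = βᵀΠ_k^⊥C_xxΠ_k^⊥β + (σ²/n)·tr(((1/n)X_{PCA,k}ᵀX_{PCA,k})^†C_xx) + σ².
Here x* ~ N(0,C_xx) is modelled as x* = C_sqrt z with z a standard Gaussian vector and
C_xx = C_sqrt C_sqrtᵀ (C_xx symmetric positive semidefinite). -/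

open Matrix MeasureTheory ProbabilityTheory
open scoped BigOperators NNReal

/-- `P` is the Moore–Penrose pseudoinverse of `A`. -/
def IsMoorePenrose {m n : Type*} [Fintype m] [Fintype n]
    (A : Matrix m n ℝ) (P : Matrix n m ℝ) : Prop :=
  A * P * A = A ∧ P * A * P = P ∧ (A * P)ᵀ = A * P ∧ (P * A)ᵀ = P * A

open Real MeasureTheory Filter Set

lemma aux_int_x_exp {b : ℝ} (hb : 0 < b) :
    ∫ x : ℝ, x * Real.exp (-b * x ^ 2) = 0 := by
  have h := integral_neg_eq_self (fun x : ℝ => x * Real.exp (-(b * x ^ 2))) volume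
  simp only [neg_sq, neg_mul, integral_neg] at h
  have h0 : ∫ x : ℝ, x * Real.exp (-(b * x ^ 2)) = 0 := by linarith
  simpa [neg_mul] using h0

lemma aux_integrable_x_exp {b : ℝ} (hb : 0 < b) :
    Integrable fun x : ℝ => x * Real.exp (-b * x ^ 2) := by
  have h := integrable_rpow_mul_exp_neg_mul_sq hb (s := 1) (by norm_num)
  simpa using h

lemma aux_integrable_x2_exp {b : ℝ} (hb : 0 < b) :
    Integrable fun x : ℝ => x ^ 2 * Real.exp (-b * x ^ 2) := by
  have h := integrable_rpow_mul_exp_neg_mul_sq hb (s := 2) (by norm_num)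
  have : ∀ x : ℝ, x ^ (2 : ℝ) = x ^ 2 := fun x => Real.rpow_two x
  simpa [this] using h

lemma aux_int_x2_exp {b : ℝ} (hb : 0 < b) :
    ∫ x : ℝ, x ^ 2 * Real.exp (-b * x ^ 2)
      = (2 * b)⁻¹ * Real.sqrt (π / b) := by
  set g : ℝ → ℝ := fun x => x ^ 2 * Real.exp (-b * x ^ 2) - (2 * b)⁻¹ * Real.exp (-b * x ^ 2)
    with hg
  have hb2 : (2 * b) ≠ 0 := by positivity
  have hgint : Integrable g := (aux_integrable_x2_exp hb).sub
    ((integrable_exp_neg_mul_sq hb).const_mul _)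
  -- FTC on Ioi 0
  have hderiv : ∀ x ∈ Ici (0:ℝ), HasDerivAt (fun x : ℝ => -(2 * b)⁻¹ * (x * Real.exp (-b * x ^ 2))) (g x) x := by
    intro x _
    have h1 : HasDerivAt (fun x : ℝ => -b * x ^ 2) (-b * (2 * x)) x := by
      simpa using ((hasDerivAt_pow 2 x).const_mul (-b))
    have h2 : HasDerivAt (fun x : ℝ => Real.exp (-b * x ^ 2))
        (Real.exp (-b * x ^ 2) * (-b * (2 * x))) x := h1.exp
    have h3 : HasDerivAt (fun x : ℝ => x * Real.exp (-b * x ^ 2))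
        (1 * Real.exp (-b * x ^ 2) + x * (Real.exp (-b * x ^ 2) * (-b * (2 * x)))) x :=
      (hasDerivAt_id x).mul h2
    have h4 := h3.const_mul (-(2 * b)⁻¹)
    refine h4.congr_deriv ?_
    rw [hg]
    field_simp
    ring
  have htend : Tendsto (fun x : ℝ => -(2 * b)⁻¹ * (x * Real.exp (-b * x ^ 2))) atTop (nhds 0) := by
    have h0 : (fun x : ℝ => x ^ (1:ℝ) * Real.exp (-b * x ^ 2)) =o[atTop]
        fun x : ℝ => Real.exp (-(1/2) * x) := rpow_mul_exp_neg_mul_sq_isLittleO_exp_neg hb 1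
    have hhalf : Tendsto (fun x : ℝ => (1/2 : ℝ) * x) atTop atTop :=
      tendsto_id.const_mul_atTop (by norm_num)
    have h1 : Tendsto (fun x : ℝ => Real.exp (-(1/2) * x)) atTop (nhds 0) := by
      simpa [Function.comp_def, neg_mul] using
        Real.tendsto_exp_neg_atTop_nhds_zero.comp hhalf
    have h2 : Tendsto (fun x : ℝ => x ^ (1:ℝ) * Real.exp (-b * x ^ 2)) atTop (nhds 0) :=
      h0.trans_tendsto h1
    have h3 : Tendsto (fun x : ℝ => x * Real.exp (-b * x ^ 2)) atTop (nhds 0) := by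
      refine h2.congr' ?_
      filter_upwards [eventually_ge_atTop (0:ℝ)] with x hx
      rw [Real.rpow_one]
    simpa using h3.const_mul (-(2 * b)⁻¹)
  have hIoi : ∫ x in Ioi (0:ℝ), g x = 0 := by
    have := integral_Ioi_of_hasDerivAt_of_tendsto'
      (fun x hx => hderiv x hx) hgint.integrableOn htend
    simpa using this
  have hIic : ∫ x in Iic (0:ℝ), g x = 0 := by
    have hcomp : ∫ x in Ioi (0:ℝ), g (-x) = ∫ x in Iic (0:ℝ), g x := by
      simpa using integral_comp_neg_Ioi (0:ℝ) g
    have hev : ∀ x : ℝ, g (-x) = g x := by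
      intro x; simp only [hg, neg_sq]
    rw [← hcomp]
    simp_rw [hev]
    exact hIoi
  have htot : ∫ x : ℝ, g x = 0 := by
    rw [← intervalIntegral.integral_Iic_add_Ioi hgint.integrableOn hgint.integrableOn, hIic, hIoi]
    ring
  have hsplit : ∫ x : ℝ, g x
      = (∫ x : ℝ, x ^ 2 * Real.exp (-b * x ^ 2)) - (2 * b)⁻¹ * ∫ x : ℝ, Real.exp (-b * x ^ 2) := by
    rw [hg]
    rw [integral_sub (aux_integrable_x2_exp hb) ((integrable_exp_neg_mul_sq hb).const_mul _),
      integral_const_mul]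
  rw [htot] at hsplit
  have := integral_gaussian b
  rw [this] at hsplit
  linarith

open Real MeasureTheory Filter Set ProbabilityTheory
open scoped NNReal ENNReal

-- transfer lemma: integral against gaussianReal as a Lebesgue integral with density
lemma aux_gauss_integral_eq (μ : ℝ) {v : ℝ≥0} (hv : v ≠ 0) (g : ℝ → ℝ) :
    ∫ x, g x ∂(gaussianReal μ v) = ∫ x, gaussianPDFReal μ v x * g x := by
  rw [gaussianReal_of_var_ne_zero μ hv]
  have hmeas : Measurable fun x => (gaussianPDFReal μ v x).toNNReal :=
    (measurable_gaussianPDFReal μ v).real_toNNReal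
  have hd : (gaussianPDF μ v) = fun x => ((gaussianPDFReal μ v x).toNNReal : ℝ≥0∞) := rfl
  rw [hd]
  rw [integral_withDensity_eq_integral_smul hmeas g]
  congr 1
  funext x
  rw [NNReal.smul_def, smul_eq_mul, Real.coe_toNNReal _ (gaussianPDFReal_nonneg μ v x)]

lemma aux_gauss_integrable {v : ℝ≥0} (hv : v ≠ 0) (g : ℝ → ℝ)
    (hg : Measurable g)
    (hgi : Integrable fun x => gaussianPDFReal 0 v x * g x) :
    Integrable g (gaussianReal 0 v) := by
  rw [gaussianReal_of_var_ne_zero 0 hv]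
  rw [integrable_withDensity_iff (measurable_gaussianPDF 0 v)
    (ae_of_all _ fun x => ENNReal.ofReal_lt_top)]
  refine hgi.congr ?_
  refine ae_of_all _ fun x => ?_
  show gaussianPDFReal 0 v x * g x = g x * (gaussianPDF 0 v x).toReal
  rw [gaussianPDF_def, ENNReal.toReal_ofReal (gaussianPDFReal_nonneg 0 v x)]
  ring

lemma aux_pdf_eq (v : ℝ≥0) (x : ℝ) :
    gaussianPDFReal 0 v x = (Real.sqrt (2 * π * v))⁻¹ * Real.exp (-(2 * (v:ℝ))⁻¹ * x ^ 2) := by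
  rw [gaussianPDFReal]
  congr 1
  congr 1
  rw [sub_zero]
  rw [div_eq_mul_inv, neg_mul, neg_mul]
  ring

lemma aux_integrable_id_gauss (v : ℝ≥0) :
    Integrable (fun x : ℝ => x) (gaussianReal 0 v) := by
  rcases eq_or_ne v 0 with rfl | hv
  · simp only [gaussianReal_zero_var]
    refine (integrable_const (0:ℝ)).congr ?_
    rw [MeasureTheory.ae_dirac_eq _]
    exact Filter.eventually_pure.2 (by norm_num)
  · have hb : 0 < (2 * (v:ℝ))⁻¹ := by positivity
    refine aux_gauss_integrable hv _ measurable_id ?_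
    have := (aux_integrable_x_exp hb).const_mul (Real.sqrt (2 * π * v))⁻¹
    refine this.congr (ae_of_all _ fun x => ?_)
    simp only [aux_pdf_eq]
    ring

lemma aux_integrable_sq_gauss (v : ℝ≥0) :
    Integrable (fun x : ℝ => x ^ 2) (gaussianReal 0 v) := by
  rcases eq_or_ne v 0 with rfl | hv
  · simp only [gaussianReal_zero_var]
    refine (integrable_const (0:ℝ)).congr ?_
    rw [MeasureTheory.ae_dirac_eq _]
    exact Filter.eventually_pure.2 (by norm_num)
  · have hb : 0 < (2 * (v:ℝ))⁻¹ := by positivity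
    refine aux_gauss_integrable hv _ (by fun_prop) ?_
    have := (aux_integrable_x2_exp hb).const_mul (Real.sqrt (2 * π * v))⁻¹
    refine this.congr (ae_of_all _ fun x => ?_)
    simp only [aux_pdf_eq]
    ring

lemma aux_int_id_gauss (v : ℝ≥0) :
    ∫ x, x ∂(gaussianReal 0 v) = 0 := by
  rcases eq_or_ne v 0 with rfl | hv
  · simp
  · rw [aux_gauss_integral_eq 0 hv]
    have hb : 0 < (2 * (v:ℝ))⁻¹ := by positivity
    have h0 := aux_int_x_exp hb
    calc ∫ x, gaussianPDFReal 0 v x * x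
        = ∫ x : ℝ, (Real.sqrt (2 * π * v))⁻¹ * (x * Real.exp (-(2 * (v:ℝ))⁻¹ * x ^ 2)) := by
          congr 1; funext x; rw [aux_pdf_eq]; ring
      _ = (Real.sqrt (2 * π * v))⁻¹ * ∫ x : ℝ, x * Real.exp (-(2 * (v:ℝ))⁻¹ * x ^ 2) :=
          integral_const_mul _ _
      _ = 0 := by rw [h0, mul_zero]

lemma aux_int_sq_gauss (v : ℝ≥0) :
    ∫ x, x ^ 2 ∂(gaussianReal 0 v) = (v : ℝ) := by
  rcases eq_or_ne v 0 with rfl | hv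
  · simp
  · rw [aux_gauss_integral_eq 0 hv]
    have hvr : (0:ℝ) < (v:ℝ) := by positivity
    have hb : 0 < (2 * (v:ℝ))⁻¹ := by positivity
    have h0 := aux_int_x2_exp hb
    calc ∫ x, gaussianPDFReal 0 v x * x ^ 2
        = ∫ x : ℝ, (Real.sqrt (2 * π * v))⁻¹ * (x ^ 2 * Real.exp (-(2 * (v:ℝ))⁻¹ * x ^ 2)) := by
          congr 1; funext x; rw [aux_pdf_eq]; ring
      _ = (Real.sqrt (2 * π * v))⁻¹ * ∫ x : ℝ, x ^ 2 * Real.exp (-(2 * (v:ℝ))⁻¹ * x ^ 2) :=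
          integral_const_mul _ _
      _ = (Real.sqrt (2 * π * v))⁻¹ * ((2 * (2 * (v:ℝ))⁻¹)⁻¹ * Real.sqrt (π / (2 * (v:ℝ))⁻¹)) := by
          rw [h0]
      _ = (v : ℝ) := by
          have hvr' : (v:ℝ) ≠ 0 := ne_of_gt hvr
          have e1 : (2 * (2 * (v:ℝ))⁻¹)⁻¹ = (v:ℝ) := by
            field_simp
          have e2 : π / (2 * (v:ℝ))⁻¹ = 2 * π * (v:ℝ) := by
            field_simp
          rw [e1, e2]
          have h2 : (0:ℝ) < 2 * π * (v:ℝ) := by positivity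
          rw [mul_comm (v:ℝ) (Real.sqrt (2 * π * (v:ℝ))), ← mul_assoc,
            inv_mul_cancel₀ (ne_of_gt (Real.sqrt_pos.mpr h2)), one_mul]
open scoped NNReal ENNReal BigOperators

section Pi

variable (q : ℕ) (v : ℝ≥0)

lemma aux_pi_int_mul (i j : Fin q) :
    ∫ z : Fin q → ℝ, z i * z j ∂(Measure.pi fun _ => gaussianReal 0 v)
      = if i = j then (v : ℝ) else 0 := by
  letI : MeasureSpace ℝ := ⟨gaussianReal 0 v⟩
  haveI : IsProbabilityMeasure (volume : Measure ℝ) :=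
    inferInstanceAs (IsProbabilityMeasure (gaussianReal 0 v))
  haveI : SigmaFinite (volume : Measure ℝ) :=
    inferInstanceAs (SigmaFinite (gaussianReal 0 v))
  have hvolR : (volume : Measure ℝ) = gaussianReal 0 v := rfl
  have hvol : (volume : Measure (Fin q → ℝ)) = Measure.pi fun _ => gaussianReal 0 v := rfl
  rw [← hvol]
  set f : Fin q → ℝ → ℝ :=
    fun l x => (if l = i then x else 1) * (if l = j then x else 1) with hf
  have hprod : ∀ z : Fin q → ℝ, z i * z j = ∏ l, f l (z l) := by
    intro z
    rw [hf]
    simp only [Finset.prod_mul_distrib]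
    rw [Finset.prod_ite_eq' Finset.univ i (fun l => z l),
      Finset.prod_ite_eq' Finset.univ j (fun l => z l)]
    simp
  have hl : ∀ l, (∫ x, f l x)
      = if l = i then (if l = j then (v:ℝ) else 0)
        else (if l = j then 0 else 1) := by
    intro l
    by_cases hli : l = i
    · by_cases hlj : l = j
      · rw [if_pos hli, if_pos hlj]
        have hfl : f l = fun x => x ^ 2 := by
          funext x
          show (if l = i then x else 1) * (if l = j then x else 1) = x ^ 2
          rw [if_pos hli, if_pos hlj]; ring
        rw [hfl, hvolR, aux_int_sq_gauss]
      · rw [if_pos hli, if_neg hlj]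
        have hfl : f l = fun x => x := by
          funext x
          show (if l = i then x else 1) * (if l = j then x else 1) = x
          rw [if_pos hli, if_neg hlj]; ring
        rw [hfl, hvolR, aux_int_id_gauss]
    · rw [if_neg hli]
      by_cases hlj : l = j
      · rw [if_pos hlj]
        have hfl : f l = fun x => x := by
          funext x
          show (if l = i then x else 1) * (if l = j then x else 1) = x
          rw [if_neg hli, if_pos hlj]; ring
        rw [hfl, hvolR, aux_int_id_gauss]
      · rw [if_neg hlj]
        have hfl : f l = fun _ => (1:ℝ) := by
          funext x
          show (if l = i then x else 1) * (if l = j then x else 1) = 1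
          rw [if_neg hli, if_neg hlj]; ring
        rw [hfl]
        simp
  calc ∫ z : Fin q → ℝ, z i * z j
      = ∫ z : Fin q → ℝ, ∏ l, f l (z l) := by simp_rw [hprod]
    _ = ∏ l, ∫ x, f l x := integral_fintype_prod_eq_prod f
    _ = if i = j then (v : ℝ) else 0 := by
        simp_rw [hl]
        by_cases hij : i = j
        · subst hij
          rw [if_pos rfl]
          have h2 : ∀ l : Fin q, (if l = i then (if l = i then (v:ℝ) else 0)
              else (if l = i then 0 else 1)) = if l = i then (v:ℝ) else 1 := by
            intro l; by_cases h : l = i <;> simp [h]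
          simp_rw [h2]
          rw [Finset.prod_ite_eq' Finset.univ i (fun _ => (v:ℝ))]
          simp
        · rw [if_neg hij]
          refine Finset.prod_eq_zero (Finset.mem_univ i) ?_
          simp [hij]

lemma aux_pi_integrable_mul (i j : Fin q) :
    Integrable (fun z : Fin q → ℝ => z i * z j)
      (Measure.pi fun _ => gaussianReal 0 v) := by
  letI : MeasureSpace ℝ := ⟨gaussianReal 0 v⟩
  haveI : IsProbabilityMeasure (volume : Measure ℝ) :=
    inferInstanceAs (IsProbabilityMeasure (gaussianReal 0 v))
  haveI : SigmaFinite (volume : Measure ℝ) :=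
    inferInstanceAs (SigmaFinite (gaussianReal 0 v))
  have hvolR : (volume : Measure ℝ) = gaussianReal 0 v := rfl
  have hvol : (volume : Measure (Fin q → ℝ)) = Measure.pi fun _ => gaussianReal 0 v := rfl
  rw [← hvol]
  set f : Fin q → ℝ → ℝ :=
    fun l x => (if l = i then x else 1) * (if l = j then x else 1) with hf
  have hprod : ∀ z : Fin q → ℝ, z i * z j = ∏ l, f l (z l) := by
    intro z
    rw [hf]
    simp only [Finset.prod_mul_distrib]
    rw [Finset.prod_ite_eq' Finset.univ i (fun l => z l),
      Finset.prod_ite_eq' Finset.univ j (fun l => z l)]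
    simp
  have : Integrable (fun z : Fin q → ℝ => ∏ l, f l (z l)) := by
    refine Integrable.fintype_prod (f := f) fun l => ?_
    by_cases hli : l = i
    · by_cases hlj : l = j
      · have hfl : f l = fun x => x ^ 2 := by
          funext x
          show (if l = i then x else 1) * (if l = j then x else 1) = x ^ 2
          rw [if_pos hli, if_pos hlj]; ring
        rw [hfl]; exact aux_integrable_sq_gauss v
      · have hfl : f l = fun x => x := by
          funext x
          show (if l = i then x else 1) * (if l = j then x else 1) = x
          rw [if_pos hli, if_neg hlj]; ring
        rw [hfl]; exact aux_integrable_id_gauss v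
    · by_cases hlj : l = j
      · have hfl : f l = fun x => x := by
          funext x
          show (if l = i then x else 1) * (if l = j then x else 1) = x
          rw [if_neg hli, if_pos hlj]; ring
        rw [hfl]; exact aux_integrable_id_gauss v
      · have hfl : f l = fun _ => (1:ℝ) := by
          funext x
          show (if l = i then x else 1) * (if l = j then x else 1) = 1
          rw [if_neg hli, if_neg hlj]; ring
        rw [hfl]; exact integrable_const 1
  exact this.congr (ae_of_all _ fun z => (hprod z).symm)

lemma aux_pi_int_single (i : Fin q) :
    ∫ z : Fin q → ℝ, z i ∂(Measure.pi fun _ => gaussianReal 0 v) = 0 := by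
  letI : MeasureSpace ℝ := ⟨gaussianReal 0 v⟩
  haveI : IsProbabilityMeasure (volume : Measure ℝ) :=
    inferInstanceAs (IsProbabilityMeasure (gaussianReal 0 v))
  haveI : SigmaFinite (volume : Measure ℝ) :=
    inferInstanceAs (SigmaFinite (gaussianReal 0 v))
  have hvolR : (volume : Measure ℝ) = gaussianReal 0 v := rfl
  have hvol : (volume : Measure (Fin q → ℝ)) = Measure.pi fun _ => gaussianReal 0 v := rfl
  rw [← hvol]
  set f : Fin q → ℝ → ℝ := fun l x => if l = i then x else 1 with hf
  have hprod : ∀ z : Fin q → ℝ, z i = ∏ l, f l (z l) := by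
    intro z
    rw [hf]
    rw [Finset.prod_ite_eq' Finset.univ i (fun l => z l)]
    simp
  calc ∫ z : Fin q → ℝ, z i
      = ∫ z : Fin q → ℝ, ∏ l, f l (z l) := by simp_rw [hprod]
    _ = ∏ l, ∫ x, f l x := integral_fintype_prod_eq_prod f
    _ = 0 := by
        refine Finset.prod_eq_zero (Finset.mem_univ i) ?_
        have hfl : f i = fun x => x := by
          funext x
          show (if i = i then x else 1) = x
          rw [if_pos rfl]
        rw [hfl, hvolR, aux_int_id_gauss]

lemma aux_pi_integrable_single (i : Fin q) :
    Integrable (fun z : Fin q → ℝ => z i)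
      (Measure.pi fun _ => gaussianReal 0 v) := by
  letI : MeasureSpace ℝ := ⟨gaussianReal 0 v⟩
  haveI : IsProbabilityMeasure (volume : Measure ℝ) :=
    inferInstanceAs (IsProbabilityMeasure (gaussianReal 0 v))
  haveI : SigmaFinite (volume : Measure ℝ) :=
    inferInstanceAs (SigmaFinite (gaussianReal 0 v))
  have hvol : (volume : Measure (Fin q → ℝ)) = Measure.pi fun _ => gaussianReal 0 v := rfl
  rw [← hvol]
  set f : Fin q → ℝ → ℝ := fun l x => if l = i then x else 1 with hf
  have hprod : ∀ z : Fin q → ℝ, z i = ∏ l, f l (z l) := by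
    intro z
    rw [hf]
    rw [Finset.prod_ite_eq' Finset.univ i (fun l => z l)]
    simp
  have : Integrable (fun z : Fin q → ℝ => ∏ l, f l (z l)) := by
    refine Integrable.fintype_prod (f := f) fun l => ?_
    by_cases hli : l = i
    · have hfl : f l = fun x => x := by
        funext x
        show (if l = i then x else 1) = x
        rw [if_pos hli]
      rw [hfl]; exact aux_integrable_id_gauss v
    · have hfl : f l = fun _ => (1:ℝ) := by
        funext x
        show (if l = i then x else 1) = 1
        rw [if_neg hli]
      rw [hfl]; exact integrable_const 1
  exact this.congr (ae_of_all _ fun z => (hprod z).symm)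

lemma aux_gpoly (M : Matrix (Fin q) (Fin q) ℝ) (bb : Fin q → ℝ) (a : ℝ) :
    ∫ z : Fin q → ℝ,
        ((∑ i, ∑ j, M i j * (z i * z j)) + ((∑ i, bb i * z i) + a))
      ∂(Measure.pi fun _ => gaussianReal 0 v)
    = (v : ℝ) * (∑ i, M i i) + a := by
  set Pm : Measure (Fin q → ℝ) := Measure.pi fun _ => gaussianReal 0 v with hPm
  haveI : IsProbabilityMeasure Pm := by
    rw [hPm]; infer_instance
  have hInt1 : Integrable (fun z : Fin q → ℝ => ∑ i, ∑ j, M i j * (z i * z j)) Pm := by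
    refine integrable_finset_sum _ fun i _ => integrable_finset_sum _ fun j _ => ?_
    exact (aux_pi_integrable_mul q v i j).const_mul _
  have hInt2 : Integrable (fun z : Fin q → ℝ => ∑ i, bb i * z i) Pm := by
    refine integrable_finset_sum _ fun i _ => ?_
    exact (aux_pi_integrable_single q v i).const_mul _
  have hInt3 : Integrable (fun _ : Fin q → ℝ => a) Pm := integrable_const a
  have hInt23 : Integrable (fun z : Fin q → ℝ => (∑ i, bb i * z i) + a) Pm := hInt2.add hInt3
  rw [integral_add hInt1 hInt23, integral_add hInt2 hInt3]
  have e1 : ∫ z : Fin q → ℝ, ∑ i, ∑ j, M i j * (z i * z j) ∂Pm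
      = (v : ℝ) * ∑ i, M i i := by
    rw [integral_finset_sum _ fun i _ => integrable_finset_sum _ fun j _ =>
      (aux_pi_integrable_mul q v i j).const_mul (M i j)]
    have h1 : ∀ i, ∫ z : Fin q → ℝ, ∑ j, M i j * (z i * z j) ∂Pm
        = (v:ℝ) * M i i := by
      intro i
      rw [integral_finset_sum _ fun j _ => (aux_pi_integrable_mul q v i j).const_mul (M i j)]
      have h2 : ∀ j, ∫ z : Fin q → ℝ, M i j * (z i * z j) ∂Pm
          = M i j * (if i = j then (v:ℝ) else 0) := by
        intro j
        rw [integral_const_mul, hPm, aux_pi_int_mul q v i j]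
      refine (Finset.sum_congr rfl fun j _ => h2 j).trans ?_
      simp [mul_ite, Finset.sum_ite_eq, mul_comm]
    refine (Finset.sum_congr rfl fun i _ => h1 i).trans ?_
    rw [← Finset.mul_sum]
  have e2 : ∫ z : Fin q → ℝ, ∑ i, bb i * z i ∂Pm = 0 := by
    rw [integral_finset_sum _ fun i _ => (aux_pi_integrable_single q v i).const_mul _]
    have h1 : ∀ i, ∫ z : Fin q → ℝ, bb i * z i ∂Pm = 0 := by
      intro i
      rw [integral_const_mul, hPm, aux_pi_int_single q v i, mul_zero]
    refine (Finset.sum_congr rfl fun i _ => h1 i).trans ?_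
    simp
  have e3 : ∫ _ : Fin q → ℝ, a ∂Pm = a := by simp
  rw [e1, e2, e3]
  ring

end Pi

lemma aux_inner (V : ℝ≥0) (c d : ℝ) :
    ∫ e, (c - (d + e)) ^ 2 ∂(gaussianReal 0 V) = (c - d) ^ 2 + (V : ℝ) := by
  have h : (fun e : ℝ => (c - (d + e)) ^ 2)
      = fun e : ℝ => ((c - d) ^ 2 + (-2 * (c - d)) * e) + e ^ 2 := by
    funext e; ring
  rw [h]
  have hI1 : Integrable (fun e : ℝ => (c - d) ^ 2 + (-2 * (c - d)) * e) (gaussianReal 0 V) :=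
    (integrable_const ((c - d) ^ 2)).add ((aux_integrable_id_gauss V).const_mul (-2 * (c - d)))
  rw [integral_add hI1 (aux_integrable_sq_gauss V),
    integral_add (integrable_const ((c - d) ^ 2))
      ((aux_integrable_id_gauss V).const_mul (-2 * (c - d)))]
  rw [integral_const_mul]
  have h1 : ∫ x, x ∂(gaussianReal 0 V) = 0 := aux_int_id_gauss V
  have h2 : ∫ x, x ^ 2 ∂(gaussianReal 0 V) = (V:ℝ) := aux_int_sq_gauss V
  rw [h1, h2]
  simp

open Matrix MeasureTheory ProbabilityTheory
open scoped BigOperators NNReal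


lemma aux_mp_unique {m n : Type*} [Fintype m] [Fintype n]
    (A : Matrix m n ℝ) (P Q : Matrix n m ℝ)
    (hP : IsMoorePenrose A P) (hQ : IsMoorePenrose A Q) : P = Q := by
  obtain ⟨hP1, hP2, hP3, hP4⟩ := hP
  obtain ⟨hQ1, hQ2, hQ3, hQ4⟩ := hQ
  have hAP : A * P = A * Q := by
    have key : (A * P) * (A * Q) = A * Q := by
      calc (A * P) * (A * Q) = (A * P * A) * Q := by simp only [Matrix.mul_assoc]
        _ = A * Q := by rw [hP1]
    have key2 : A * P = (A * P) * (A * Q) := by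
      calc A * P = (A * P)ᵀ := hP3.symm
        _ = Pᵀ * Aᵀ := transpose_mul _ _
        _ = Pᵀ * (A * Q * A)ᵀ := by conv_lhs => rw [show Aᵀ = (A * Q * A)ᵀ from by rw [hQ1]]
        _ = Pᵀ * (Aᵀ * (A * Q)ᵀ) := by rw [transpose_mul (A * Q) A]
        _ = (Pᵀ * Aᵀ) * (A * Q)ᵀ := (Matrix.mul_assoc _ _ _).symm
        _ = (A * P)ᵀ * (A * Q)ᵀ := by rw [← transpose_mul A P]
        _ = (A * P) * (A * Q) := by rw [hP3, hQ3]
    rw [key2, key]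
  have hPA : P * A = Q * A := by
    have key : (Q * A) * (P * A) = Q * A := by
      calc (Q * A) * (P * A) = Q * (A * P * A) := by simp only [Matrix.mul_assoc]
        _ = Q * A := by rw [hP1]
    have key2 : P * A = (Q * A) * (P * A) := by
      calc P * A = (P * A)ᵀ := hP4.symm
        _ = Aᵀ * Pᵀ := transpose_mul _ _
        _ = (A * Q * A)ᵀ * Pᵀ := by conv_lhs => rw [show Aᵀ = (A * Q * A)ᵀ from by rw [hQ1]]
        _ = (A * (Q * A))ᵀ * Pᵀ := by rw [Matrix.mul_assoc]
        _ = ((Q * A)ᵀ * Aᵀ) * Pᵀ := by rw [transpose_mul A (Q * A)]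
        _ = (Q * A)ᵀ * (Aᵀ * Pᵀ) := Matrix.mul_assoc _ _ _
        _ = (Q * A)ᵀ * (P * A)ᵀ := by rw [← transpose_mul P A]
        _ = (Q * A) * (P * A) := by rw [hQ4, hP4]
    rw [key2, key]
  calc P = P * A * P := hP2.symm
    _ = (Q * A) * P := by rw [hPA]
    _ = Q * (A * Q) := by rw [Matrix.mul_assoc, hAP]
    _ = Q := by rw [← Matrix.mul_assoc, hQ2]

lemma aux_vmv_mul {m n p : Type*} [Fintype m] [Fintype n] [Fintype p]
    (a : m → ℝ) (b : n → ℝ) (c : n → ℝ) (d : p → ℝ) :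
    (vecMulVec a b : Matrix m n ℝ) * (vecMulVec c d) = (b ⬝ᵥ c) • vecMulVec a d := by
  ext i j
  simp only [Matrix.mul_apply, vecMulVec_apply, Matrix.smul_apply, smul_eq_mul,
    dotProduct, Finset.sum_mul]
  refine Finset.sum_congr rfl fun x _ => by ring

lemma aux_vmv_mulVec {m n : Type*} [Fintype m] [Fintype n]
    (a : m → ℝ) (b : n → ℝ) (x : n → ℝ) :
    (vecMulVec a b : Matrix m n ℝ) *ᵥ x = (b ⬝ᵥ x) • a := by
  ext i
  simp only [Matrix.mulVec, vecMulVec_apply, dotProduct, Pi.smul_apply, smul_eq_mul,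
    Finset.sum_mul]
  refine Finset.sum_congr rfl fun z _ => by ring

lemma aux_vmv_transpose {m n : Type*} [Fintype m] [Fintype n]
    (a : m → ℝ) (b : n → ℝ) :
    (vecMulVec a b : Matrix m n ℝ)ᵀ = vecMulVec b a := by
  ext i j
  simp [vecMulVec_apply, mul_comm]

lemma aux_vmv_mul_mat {m n p : Type*} [Fintype m] [Fintype n] [Fintype p]
    (a : m → ℝ) (b : n → ℝ) (X : Matrix n p ℝ) :
    (vecMulVec a b : Matrix m n ℝ) * X = vecMulVec a (Xᵀ *ᵥ b) := by
  ext i j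
  simp only [Matrix.mul_apply, vecMulVec_apply, Matrix.mulVec, dotProduct,
    Matrix.transpose_apply, Finset.mul_sum]
  refine Finset.sum_congr rfl fun x _ => by ring

/-- product of two sums of scaled rank-one matrices, with orthogonality collapse -/
lemma aux_prod_sums {m1 m2 m3 ι : Type*} [Fintype m1] [Fintype m2] [Fintype m3]
    [DecidableEq ι]
    (S : Finset ι) (c d : ι → ℝ) (a : ι → m1 → ℝ) (b e : ι → m2 → ℝ) (f : ι → m3 → ℝ)
    (horth : ∀ i ∈ S, ∀ j ∈ S, b i ⬝ᵥ e j = if i = j then (1:ℝ) else 0) :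
    (∑ i ∈ S, c i • vecMulVec (a i) (b i)) * (∑ j ∈ S, d j • vecMulVec (e j) (f j))
      = ∑ i ∈ S, (c i * d i) • vecMulVec (a i) (f i) := by
  rw [Matrix.sum_mul]
  refine Finset.sum_congr rfl fun i hi => ?_
  rw [Matrix.mul_sum]
  have h1 : ∀ j ∈ S, (c i • vecMulVec (a i) (b i) : Matrix m1 m2 ℝ) * (d j • vecMulVec (e j) (f j))
      = if i = j then (c i * d i) • vecMulVec (a i) (f i) else 0 := by
    intro j hj
    rw [Matrix.smul_mul, Matrix.mul_smul, aux_vmv_mul, horth i hi j hj]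
    by_cases h : i = j
    · subst h
      simp [if_pos rfl, smul_smul]
    · simp [if_neg h]
  rw [Finset.sum_congr rfl h1, Finset.sum_ite_eq S i (fun _ => (c i * d i) • vecMulVec (a i) (f i)),
    if_pos hi]

lemma aux_dot1 {m n : Type*} [Fintype m] [Fintype n]
    (A : Matrix m n ℝ) (x : n → ℝ) (y : m → ℝ) :
    (A *ᵥ x) ⬝ᵥ y = x ⬝ᵥ (Aᵀ *ᵥ y) := by
  rw [dotProduct_comm, Matrix.dotProduct_mulVec, dotProduct_comm, Matrix.mulVec_transpose]

lemma aux_dot2 {n : Type*} [Fintype n] (M : Matrix n n ℝ) (x y : n → ℝ) :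
    x ⬝ᵥ (M *ᵥ y) = ∑ i, ∑ j, M i j * (x i * y j) := by
  simp only [dotProduct, Matrix.mulVec, Finset.mul_sum]
  refine Finset.sum_congr rfl fun i _ => Finset.sum_congr rfl fun j _ => by ring

lemma aux_vmv_smul_right {m n : Type*} [Fintype m] [Fintype n]
    (a : m → ℝ) (c : ℝ) (b : n → ℝ) :
    vecMulVec a (c • b) = c • vecMulVec a b := by
  ext i j
  simp [vecMulVec_apply]
  ring

lemma aux_sum_mulVec {ι m n : Type*} [Fintype m] [Fintype n]
    (T : Finset ι) (A : ι → Matrix m n ℝ) (x : n → ℝ) :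
    (∑ i ∈ T, A i) *ᵥ x = ∑ i ∈ T, (A i *ᵥ x) := by
  ext j
  simp only [Matrix.mulVec, dotProduct, Finset.sum_apply, Matrix.sum_apply, Finset.sum_mul]
  rw [Finset.sum_comm]

theorem pca_ols_risk_decomposition
    (n p k : ℕ) (hn : 0 < n) (hk : k < min n p)
    (X : Matrix (Fin n) (Fin p) ℝ) (β : Fin p → ℝ)
    (Cxx Csqrt : Matrix (Fin p) (Fin p) ℝ)
    (hCxx : Cxx = Csqrt * Csqrtᵀ)
    (σ : ℝ) (hσ : 0 < σ)
    -- eigendecomposition of the empirical covariance (1/n) XᵀX, sorted decreasingly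
    (lamt : Fin p → ℝ) (ut : Fin p → Fin p → ℝ)
    (hlamt_anti : ∀ i j : Fin p, i ≤ j → lamt j ≤ lamt i)
    (hlamt_pos : ∀ i : Fin p, (i : ℕ) < k → 0 < lamt i)
    (hut_orth : ∀ i j, ut i ⬝ᵥ ut j = if i = j then (1 : ℝ) else 0)
    (hemp : (1 / (n : ℝ)) • (Xᵀ * X) = ∑ j, lamt j • vecMulVec (ut j) (ut j))
    -- rank-k truncated SVD of X: singular triplets (√(n λ̃ᵢ), vᵢ, ũᵢ) for i < k
    (v : Fin p → Fin n → ℝ)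
    (hv_orth : ∀ i j : Fin p, (i : ℕ) < k → (j : ℕ) < k →
        v i ⬝ᵥ v j = if i = j then (1 : ℝ) else 0)
    (hsvd : ∀ i : Fin p, (i : ℕ) < k → X *ᵥ ut i = Real.sqrt ((n : ℝ) * lamt i) • v i)
    (Xk : Matrix (Fin n) (Fin p) ℝ)
    (hXk : Xk = ∑ i ∈ Finset.univ.filter (fun i : Fin p => (i : ℕ) < k),
        Real.sqrt ((n : ℝ) * lamt i) • vecMulVec (v i) (ut i))
    -- Moore–Penrose pseudoinverses used in the estimator and in the variance term
    (Xkdag : Matrix (Fin p) (Fin n) ℝ) (hXkdag : IsMoorePenrose Xk Xkdag)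
    (Bdag : Matrix (Fin p) (Fin p) ℝ)
    (hBdag : IsMoorePenrose ((1 / (n : ℝ)) • (Xkᵀ * Xk)) Bdag)
    -- projection onto the orthogonal complement of the top-k empirical eigenspace
    (PikPerp : Matrix (Fin p) (Fin p) ℝ)
    (hPerp : PikPerp = 1 - ∑ i ∈ Finset.univ.filter (fun i : Fin p => (i : ℕ) < k),
        vecMulVec (ut i) (ut i)) :
    (∫ ε : Fin n → ℝ,
      (∫ z : Fin p → ℝ,
        (∫ e : ℝ,
            ((Csqrt *ᵥ z) ⬝ᵥ (Xkdag *ᵥ (X *ᵥ β + ε)) - ((Csqrt *ᵥ z) ⬝ᵥ β + e)) ^ 2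
          ∂(gaussianReal 0 ⟨σ ^ 2, sq_nonneg σ⟩))
        ∂(Measure.pi fun _ : Fin p => gaussianReal 0 1))
      ∂(Measure.pi fun _ : Fin n => gaussianReal 0 ⟨σ ^ 2, sq_nonneg σ⟩))
    = β ⬝ᵥ ((PikPerp * Cxx * PikPerp) *ᵥ β)
      + (σ ^ 2 / (n : ℝ)) * Matrix.trace (Bdag * Cxx) + σ ^ 2 := by
  classical
  have hnR : (0:ℝ) < (n:ℝ) := by exact_mod_cast hn
  set S : Finset (Fin p) := Finset.univ.filter (fun i : Fin p => (i : ℕ) < k) with hS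
  have hmem : ∀ i : Fin p, i ∈ S → (i : ℕ) < k := fun i hi => by
    simpa [hS] using hi
  have hspos : ∀ i ∈ S, 0 < Real.sqrt ((n:ℝ) * lamt i) := fun i hi =>
    Real.sqrt_pos.mpr (mul_pos hnR (hlamt_pos i (hmem i hi)))
  have hssq : ∀ i ∈ S, Real.sqrt ((n:ℝ) * lamt i) * Real.sqrt ((n:ℝ) * lamt i)
      = (n:ℝ) * lamt i := fun i hi =>
    Real.mul_self_sqrt (mul_pos hnR (hlamt_pos i (hmem i hi))).le
  have horth_ut : ∀ i ∈ S, ∀ j ∈ S, ut i ⬝ᵥ ut j = if i = j then (1:ℝ) else 0 :=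
    fun i _ j _ => hut_orth i j
  have horth_v : ∀ i ∈ S, ∀ j ∈ S, v i ⬝ᵥ v j = if i = j then (1:ℝ) else 0 :=
    fun i hi j hj => hv_orth i j (hmem i hi) (hmem j hj)
  set Pexp : Matrix (Fin p) (Fin n) ℝ :=
    ∑ i ∈ S, (Real.sqrt ((n:ℝ) * lamt i))⁻¹ • vecMulVec (ut i) (v i) with hPexp
  set Pik : Matrix (Fin p) (Fin p) ℝ := ∑ i ∈ S, vecMulVec (ut i) (ut i) with hPik
  have hXk' : Xk = ∑ i ∈ S, Real.sqrt ((n:ℝ) * lamt i) • vecMulVec (v i) (ut i) := hXk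
  have hPik1 : Pik = ∑ i ∈ S, (1:ℝ) • vecMulVec (ut i) (ut i) := by
    rw [hPik]; exact Finset.sum_congr rfl fun i _ => (one_smul ℝ _).symm
  -- products
  have hXkPexp : Xk * Pexp = ∑ i ∈ S, (1:ℝ) • vecMulVec (v i) (v i) := by
    rw [hXk', hPexp, aux_prod_sums S _ _ _ _ _ _ horth_ut]
    exact Finset.sum_congr rfl fun i hi => by
      rw [mul_inv_cancel₀ (hspos i hi).ne']
  have hPexpXk : Pexp * Xk = Pik := by
    rw [hPexp, hXk', aux_prod_sums S _ _ _ _ _ _ horth_v, hPik1]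
    exact Finset.sum_congr rfl fun i hi => by
      rw [inv_mul_cancel₀ (hspos i hi).ne']
  have hMP : IsMoorePenrose Xk Pexp := by
    refine ⟨?_, ?_, ?_, ?_⟩
    · rw [hXkPexp]
      conv_rhs => rw [hXk']
      conv_lhs => rw [hXk']
      rw [aux_prod_sums S _ _ _ _ _ _ horth_v]
      exact Finset.sum_congr rfl fun i hi => by rw [one_mul]
    · rw [hPexpXk, hPik1]
      conv_rhs => rw [hPexp]
      conv_lhs => rw [hPexp]
      rw [aux_prod_sums S _ _ _ _ _ _ horth_ut]
      exact Finset.sum_congr rfl fun i hi => by rw [one_mul]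
    · rw [hXkPexp, Matrix.transpose_sum]
      exact Finset.sum_congr rfl fun i _ => by
        rw [Matrix.transpose_smul, aux_vmv_transpose]
    · rw [hPexpXk, hPik, Matrix.transpose_sum]
      exact Finset.sum_congr rfl fun i _ => aux_vmv_transpose _ _
  have hXkdagP : Xkdag = Pexp := aux_mp_unique Xk Xkdag Pexp hXkdag hMP
  -- the matrix B and its pseudoinverse
  have hXkT : Xkᵀ = ∑ i ∈ S, Real.sqrt ((n:ℝ) * lamt i) • vecMulVec (ut i) (v i) := by
    rw [hXk', Matrix.transpose_sum]
    exact Finset.sum_congr rfl fun i _ => by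
      rw [Matrix.transpose_smul, aux_vmv_transpose]
  have hB : (1 / (n:ℝ)) • (Xkᵀ * Xk) = ∑ i ∈ S, lamt i • vecMulVec (ut i) (ut i) := by
    rw [hXkT]
    conv_lhs => rw [hXk']
    rw [aux_prod_sums S _ _ _ _ _ _ horth_v, Finset.smul_sum]
    refine Finset.sum_congr rfl fun i hi => ?_
    rw [smul_smul, hssq i hi]
    congr 1
    field_simp
  set Bexp : Matrix (Fin p) (Fin p) ℝ :=
    ∑ i ∈ S, (lamt i)⁻¹ • vecMulVec (ut i) (ut i) with hBexp
  have hMPB : IsMoorePenrose ((1 / (n:ℝ)) • (Xkᵀ * Xk)) Bexp := by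
    rw [hB]
    have hBB : (∑ i ∈ S, lamt i • vecMulVec (ut i) (ut i)) * Bexp = Pik := by
      rw [hBexp, aux_prod_sums S _ _ _ _ _ _ horth_ut, hPik1]
      exact Finset.sum_congr rfl fun i hi => by
        rw [mul_inv_cancel₀ (hlamt_pos i (hmem i hi)).ne']
    have hBB' : Bexp * (∑ i ∈ S, lamt i • vecMulVec (ut i) (ut i)) = Pik := by
      rw [hBexp, aux_prod_sums S _ _ _ _ _ _ horth_ut, hPik1]
      exact Finset.sum_congr rfl fun i hi => by
        rw [inv_mul_cancel₀ (hlamt_pos i (hmem i hi)).ne']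
    refine ⟨?_, ?_, ?_, ?_⟩
    · rw [hBB, hPik1, aux_prod_sums S _ _ _ _ _ _ horth_ut]
      exact Finset.sum_congr rfl fun i hi => by rw [one_mul]
    · rw [hBB', hPik1, hBexp, aux_prod_sums S _ _ _ _ _ _ horth_ut]
      exact Finset.sum_congr rfl fun i hi => by rw [one_mul]
    · rw [hBB, hPik, Matrix.transpose_sum]
      exact Finset.sum_congr rfl fun i _ => aux_vmv_transpose _ _
    · rw [hBB', hPik, Matrix.transpose_sum]
      exact Finset.sum_congr rfl fun i _ => aux_vmv_transpose _ _
  have hBdagB : Bdag = Bexp := aux_mp_unique _ Bdag Bexp hBdag hMPB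
  -- X^T v_i = sqrt(n lam_i) u_i
  have hXtv : ∀ i ∈ S, Xᵀ *ᵥ v i = Real.sqrt ((n:ℝ) * lamt i) • ut i := by
    intro i hi
    have h2 : (∑ j, lamt j • vecMulVec (ut j) (ut j)) *ᵥ ut i = lamt i • ut i := by
      rw [aux_sum_mulVec]
      have h21 : ∀ j ∈ Finset.univ, (lamt j • vecMulVec (ut j) (ut j)) *ᵥ ut i
          = if j = i then lamt i • ut i else 0 := by
        intro j _
        rw [Matrix.smul_mulVec, aux_vmv_mulVec, hut_orth j i]
        by_cases h : j = i
        · subst h; simp [smul_smul]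
        · simp [h]
      rw [Finset.sum_congr rfl h21, Finset.sum_ite_eq' Finset.univ i
        (fun _ => lamt i • ut i)]
      simp
    have h4 : (1 / (n:ℝ)) • (Xᵀ *ᵥ (X *ᵥ ut i)) = lamt i • ut i := by
      rw [mulVec_mulVec, ← Matrix.smul_mulVec, hemp, h2]
    have h3 : Xᵀ *ᵥ (X *ᵥ ut i) = ((n:ℝ) * lamt i) • ut i := by
      have hc : (n:ℝ) * (1 / (n:ℝ)) = 1 := by field_simp
      calc Xᵀ *ᵥ (X *ᵥ ut i)
          = ((n:ℝ) * (1 / (n:ℝ))) • (Xᵀ *ᵥ (X *ᵥ ut i)) := by rw [hc, one_smul]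
        _ = (n:ℝ) • ((1 / (n:ℝ)) • (Xᵀ *ᵥ (X *ᵥ ut i))) := by rw [smul_smul]
        _ = (n:ℝ) • (lamt i • ut i) := by rw [h4]
        _ = ((n:ℝ) * lamt i) • ut i := by rw [smul_smul]
    have h6 : Real.sqrt ((n:ℝ) * lamt i) • (Xᵀ *ᵥ v i) = ((n:ℝ) * lamt i) • ut i := by
      rw [← Matrix.mulVec_smul, ← hsvd i (hmem i hi), h3]
    have h7 : Real.sqrt ((n:ℝ) * lamt i) • (Xᵀ *ᵥ v i)
        = Real.sqrt ((n:ℝ) * lamt i) • (Real.sqrt ((n:ℝ) * lamt i) • ut i) := by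
      rw [h6, smul_smul, hssq i hi]
    exact smul_right_injective _ (hspos i hi).ne' h7
  -- Xkdag * X = Pik
  have hPexpX : Xkdag * X = Pik := by
    rw [hXkdagP, hPexp, Matrix.sum_mul, hPik]
    refine Finset.sum_congr rfl fun i hi => ?_
    rw [Matrix.smul_mul, aux_vmv_mul_mat, hXtv i hi, aux_vmv_smul_right, smul_smul,
      inv_mul_cancel₀ (hspos i hi).ne', one_smul]
  -- Xkdag * Xkdagᵀ = (1/n) • Bdag
  have hXdXdT : Xkdag * Xkdagᵀ = (1 / (n:ℝ)) • Bdag := by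
    rw [hXkdagP, hBdagB]
    have hPexpT : Pexpᵀ = ∑ i ∈ S, (Real.sqrt ((n:ℝ) * lamt i))⁻¹ • vecMulVec (v i) (ut i) := by
      rw [hPexp, Matrix.transpose_sum]
      exact Finset.sum_congr rfl fun i _ => by
        rw [Matrix.transpose_smul, aux_vmv_transpose]
    rw [hPexpT]
    conv_lhs => rw [hPexp]
    rw [aux_prod_sums S _ _ _ _ _ _ horth_v, hBexp, Finset.smul_sum]
    refine Finset.sum_congr rfl fun i hi => ?_
    rw [smul_smul]
    congr 1
    have h1 : (Real.sqrt ((n:ℝ) * lamt i))⁻¹ * (Real.sqrt ((n:ℝ) * lamt i))⁻¹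
        = ((n:ℝ) * lamt i)⁻¹ := by rw [← mul_inv, hssq i hi]
    rw [h1, mul_inv, one_div]
  -- now the probabilistic part
  set Vσ : ℝ≥0 := (⟨σ ^ 2, sq_nonneg σ⟩ : ℝ≥0) with hVσ
  have hVσR : ((Vσ : ℝ≥0) : ℝ) = σ ^ 2 := rfl
  set m0 : Fin p → ℝ := Xkdag *ᵥ (X *ᵥ β) - β with hm0
  have stepMid : ∀ ε : Fin n → ℝ,
      (∫ z : Fin p → ℝ,
        (∫ e : ℝ,
            ((Csqrt *ᵥ z) ⬝ᵥ (Xkdag *ᵥ (X *ᵥ β + ε)) - ((Csqrt *ᵥ z) ⬝ᵥ β + e)) ^ 2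
          ∂(gaussianReal 0 Vσ))
        ∂(Measure.pi fun _ : Fin p => gaussianReal 0 1))
      = (m0 + Xkdag *ᵥ ε) ⬝ᵥ (Cxx *ᵥ (m0 + Xkdag *ᵥ ε)) + σ ^ 2 := by
    intro ε
    set u : Fin p → ℝ := Xkdag *ᵥ (X *ᵥ β + ε) - β with hu
    set w : Fin p → ℝ := Csqrtᵀ *ᵥ u with hw
    have hinner : ∀ z : Fin p → ℝ,
        (∫ e : ℝ,
            ((Csqrt *ᵥ z) ⬝ᵥ (Xkdag *ᵥ (X *ᵥ β + ε)) - ((Csqrt *ᵥ z) ⬝ᵥ β + e)) ^ 2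
          ∂(gaussianReal 0 Vσ))
        = (∑ i, ∑ j, (w i * w j) * (z i * z j)) + ((∑ i, (0:ℝ) * z i) + σ ^ 2) := by
      intro z
      rw [aux_inner Vσ _ _]
      have hcd : (Csqrt *ᵥ z) ⬝ᵥ (Xkdag *ᵥ (X *ᵥ β + ε)) - (Csqrt *ᵥ z) ⬝ᵥ β = z ⬝ᵥ w := by
        rw [← dotProduct_sub, ← hu, hw]
        exact aux_dot1 Csqrt z u
      rw [hcd]
      have hsq : (z ⬝ᵥ w) ^ 2 = ∑ i, ∑ j, (w i * w j) * (z i * z j) := by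
        rw [pow_two]
        simp only [dotProduct]
        rw [Finset.sum_mul_sum]
        exact Finset.sum_congr rfl fun i _ => Finset.sum_congr rfl fun j _ => by ring
      rw [hsq, hVσR]
      simp
    rw [integral_congr_ae (Filter.Eventually.of_forall hinner)]
    have happ := aux_gpoly p 1 (fun i j => w i * w j) (fun _ => (0:ℝ)) (σ ^ 2)
    beta_reduce at happ
    rw [happ]
    have hww : w ⬝ᵥ w = (m0 + Xkdag *ᵥ ε) ⬝ᵥ (Cxx *ᵥ (m0 + Xkdag *ᵥ ε)) := by
      have hu' : u = m0 + Xkdag *ᵥ ε := by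
        rw [hu, hm0, Matrix.mulVec_add]
        abel
      calc w ⬝ᵥ w = u ⬝ᵥ (Csqrtᵀᵀ *ᵥ (Csqrtᵀ *ᵥ u)) := by
            rw [hw]; exact aux_dot1 Csqrtᵀ u _
        _ = u ⬝ᵥ ((Csqrt * Csqrtᵀ) *ᵥ u) := by rw [transpose_transpose, mulVec_mulVec]
        _ = u ⬝ᵥ (Cxx *ᵥ u) := by rw [← hCxx]
        _ = (m0 + Xkdag *ᵥ ε) ⬝ᵥ (Cxx *ᵥ (m0 + Xkdag *ᵥ ε)) := by rw [hu']
    have hsum : ∑ i, w i * w i = w ⬝ᵥ w := rfl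
    rw [hsum, hww]
    push_cast
    ring
  rw [integral_congr_ae (Filter.Eventually.of_forall stepMid)]
  set g : Fin n → ℝ := Xkdagᵀ *ᵥ (Cxx *ᵥ m0) with hg
  set M' : Matrix (Fin n) (Fin n) ℝ := Xkdagᵀ * Cxx * Xkdag with hM'
  have hCxxT : Cxxᵀ = Cxx := by rw [hCxx, transpose_mul, transpose_transpose]
  have hout : ∀ ε : Fin n → ℝ,
      (m0 + Xkdag *ᵥ ε) ⬝ᵥ (Cxx *ᵥ (m0 + Xkdag *ᵥ ε)) + σ ^ 2
      = (∑ i, ∑ j, M' i j * (ε i * ε j))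
        + ((∑ i, (2 * g i) * ε i) + (m0 ⬝ᵥ (Cxx *ᵥ m0) + σ ^ 2)) := by
    intro ε
    have e1 : (m0 + Xkdag *ᵥ ε) ⬝ᵥ (Cxx *ᵥ (m0 + Xkdag *ᵥ ε))
        = m0 ⬝ᵥ (Cxx *ᵥ m0) + m0 ⬝ᵥ (Cxx *ᵥ (Xkdag *ᵥ ε))
          + ((Xkdag *ᵥ ε) ⬝ᵥ (Cxx *ᵥ m0) + (Xkdag *ᵥ ε) ⬝ᵥ (Cxx *ᵥ (Xkdag *ᵥ ε))) := by
      rw [Matrix.mulVec_add, add_dotProduct, dotProduct_add, dotProduct_add]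
    have e2 : (Xkdag *ᵥ ε) ⬝ᵥ (Cxx *ᵥ (Xkdag *ᵥ ε)) = ∑ i, ∑ j, M' i j * (ε i * ε j) := by
      rw [aux_dot1 Xkdag ε _, mulVec_mulVec, mulVec_mulVec, hM', aux_dot2]
    have e3 : m0 ⬝ᵥ (Cxx *ᵥ (Xkdag *ᵥ ε)) = ε ⬝ᵥ g := by
      calc m0 ⬝ᵥ (Cxx *ᵥ (Xkdag *ᵥ ε))
          = (Cxxᵀ *ᵥ m0) ⬝ᵥ (Xkdag *ᵥ ε) := by
            rw [aux_dot1 Cxxᵀ m0 (Xkdag *ᵥ ε), transpose_transpose]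
        _ = (Xkdag *ᵥ ε) ⬝ᵥ (Cxxᵀ *ᵥ m0) := dotProduct_comm _ _
        _ = ε ⬝ᵥ (Xkdagᵀ *ᵥ (Cxxᵀ *ᵥ m0)) := aux_dot1 _ _ _
        _ = ε ⬝ᵥ g := by rw [hCxxT, hg]
    have e4 : (Xkdag *ᵥ ε) ⬝ᵥ (Cxx *ᵥ m0) = ε ⬝ᵥ g := by
      rw [aux_dot1 Xkdag ε _, hg]
    have e5 : ∑ i, (2 * g i) * ε i = ε ⬝ᵥ g + ε ⬝ᵥ g := by
      simp only [dotProduct, ← Finset.sum_add_distrib]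
      exact Finset.sum_congr rfl fun i _ => by ring
    rw [e1, e2, e3, e4, e5]
    ring
  rw [integral_congr_ae (Filter.Eventually.of_forall hout)]
  have happ2 := aux_gpoly n Vσ M' (fun i => 2 * g i) (m0 ⬝ᵥ (Cxx *ᵥ m0) + σ ^ 2)
  beta_reduce at happ2
  rw [happ2, hVσR]
  -- final algebra
  have htr : ∑ i, M' i i = Matrix.trace M' := by
    simp [Matrix.trace, Matrix.diag]
  have htr2 : Matrix.trace M' = (1 / (n:ℝ)) * Matrix.trace (Bdag * Cxx) := by
    rw [hM', Matrix.trace_mul_comm, ← Matrix.mul_assoc, hXdXdT, Matrix.smul_mul,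
      Matrix.trace_smul, smul_eq_mul]
  have hm0' : m0 = -(PikPerp *ᵥ β) := by
    rw [hm0, mulVec_mulVec, hPexpX, hPerp, Matrix.sub_mulVec, Matrix.one_mulVec, neg_sub]
  have hPT : PikPerpᵀ = PikPerp := by
    rw [hPerp, Matrix.transpose_sub, Matrix.transpose_one, Matrix.transpose_sum]
    congr 1
    exact Finset.sum_congr rfl fun i _ => aux_vmv_transpose _ _
  have hfinal1 : m0 ⬝ᵥ (Cxx *ᵥ m0) = β ⬝ᵥ ((PikPerp * Cxx * PikPerp) *ᵥ β) := by
    rw [hm0', Matrix.mulVec_neg, neg_dotProduct, dotProduct_neg, neg_neg]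
    calc (PikPerp *ᵥ β) ⬝ᵥ (Cxx *ᵥ (PikPerp *ᵥ β))
        = β ⬝ᵥ (PikPerpᵀ *ᵥ (Cxx *ᵥ (PikPerp *ᵥ β))) := aux_dot1 _ _ _
      _ = β ⬝ᵥ ((PikPerp * Cxx * PikPerp) *ᵥ β) := by
          rw [hPT, mulVec_mulVec, mulVec_mulVec]
  rw [htr, htr2, hfinal1]
  ring
end

section
/- Let X ∈ ℝ^{n×p}, β ∈ ℝ^p, and let C_xx ∈ ℝ^{p×p} be symmetric positive semidefinite with eigenvalues λ₁ ≥ … ≥ λ_p ≥ 0. Let k < min(n,p), let Π_k^⊥ = I_p − Σ_{i=1}^k ũᵢũᵢᵀ where ũᵢ are orthonormal eigenvectors of (1/n)XᵀX for its k largest eigenvalues, and let E = C_xx − (1/n)XᵀX. Then the PCA-OLS squared bias satisfies B := βᵀ Π_k^⊥ C_xx Π_k^⊥ β ≤ ‖β‖² (2‖E‖_op + λ_{k+1}). -/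
/- STATEMENT 3: Let X ∈ ℝ^{n×p}, β ∈ ℝ^p, C_xx symmetric PSD with eigenvalues
λ₁ ≥ … ≥ λ_p ≥ 0. Let k < min(n,p), Π_k^⊥ = I − Σ_{i=1}^k ũᵢũᵢᵀ with ũᵢ orthonormal
eigenvectors of (1/n)XᵀX for its k largest eigenvalues, and E = C_xx − (1/n)XᵀX.
Then B := βᵀ Π_k^⊥ C_xx Π_k^⊥ β ≤ ‖β‖² (2‖E‖_op + λ_{k+1}). -/

open Matrix
open scoped BigOperators Matrix.Norms.L2Operator

section PcaAux
variable {p : ℕ}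

private lemma dot_finset_sum {ι : Type*} (s : Finset ι) (f : ι → Fin p → ℝ) (x : Fin p → ℝ) :
    x ⬝ᵥ (∑ j ∈ s, f j) = ∑ j ∈ s, x ⬝ᵥ f j := by
  simp only [dotProduct, Finset.sum_apply, Finset.mul_sum]
  exact Finset.sum_comm

private lemma finset_sum_dot {ι : Type*} (s : Finset ι) (f : ι → Fin p → ℝ) (x : Fin p → ℝ) :
    (∑ j ∈ s, f j) ⬝ᵥ x = ∑ j ∈ s, f j ⬝ᵥ x := by
  simp only [dotProduct, Finset.sum_apply, Finset.sum_mul]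
  exact Finset.sum_comm

private lemma sum_smul_vecMulVec_mulVec (s : Finset (Fin p)) (μ : Fin p → ℝ)
    (v : Fin p → Fin p → ℝ) (x : Fin p → ℝ) :
    (∑ j ∈ s, μ j • vecMulVec (v j) (v j)) *ᵥ x = ∑ j ∈ s, (μ j * (v j ⬝ᵥ x)) • v j := by
  ext i
  simp only [Matrix.mulVec, dotProduct, Finset.sum_apply, Matrix.sum_apply, Matrix.smul_apply,
    vecMulVec_apply, smul_eq_mul, Pi.smul_apply, Finset.sum_mul, Finset.mul_sum]
  rw [Finset.sum_comm]
  exact Finset.sum_congr rfl fun j _ => Finset.sum_congr rfl fun l _ => by ring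

private lemma dot_spectral (s : Finset (Fin p)) (μ : Fin p → ℝ) (v : Fin p → Fin p → ℝ)
    (x : Fin p → ℝ) :
    x ⬝ᵥ (∑ j ∈ s, μ j • vecMulVec (v j) (v j)) *ᵥ x = ∑ j ∈ s, μ j * (v j ⬝ᵥ x) ^ 2 := by
  rw [sum_smul_vecMulVec_mulVec, dot_finset_sum]
  refine Finset.sum_congr rfl fun j _ => ?_
  rw [dotProduct_smul, smul_eq_mul, dotProduct_comm]
  ring

private lemma dot_self_nonneg' {m : Type*} [Fintype m] (x : m → ℝ) : 0 ≤ x ⬝ᵥ x :=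
  Finset.sum_nonneg fun i _ => mul_self_nonneg (x i)

private lemma proj_residual (v : Fin p → Fin p → ℝ)
    (hv : ∀ i j, v i ⬝ᵥ v j = if i = j then (1:ℝ) else 0)
    (x : Fin p → ℝ) (s : Finset (Fin p)) :
    (x - ∑ j ∈ s, (v j ⬝ᵥ x) • v j) ⬝ᵥ (x - ∑ j ∈ s, (v j ⬝ᵥ x) • v j)
      = x ⬝ᵥ x - ∑ j ∈ s, (v j ⬝ᵥ x) ^ 2 := by
  have h1 : ∀ y : Fin p → ℝ, y ⬝ᵥ (∑ j ∈ s, (v j ⬝ᵥ x) • v j)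
      = ∑ j ∈ s, (v j ⬝ᵥ x) * (v j ⬝ᵥ y) := by
    intro y
    rw [dot_finset_sum]
    exact Finset.sum_congr rfl fun j _ => by
      rw [dotProduct_smul, smul_eq_mul, dotProduct_comm y (v j)]
  have h2 : (∑ j ∈ s, (v j ⬝ᵥ x) • v j) ⬝ᵥ x = ∑ j ∈ s, (v j ⬝ᵥ x) ^ 2 := by
    rw [dotProduct_comm, h1]
    exact Finset.sum_congr rfl fun j _ => by ring
  have h3 : x ⬝ᵥ (∑ j ∈ s, (v j ⬝ᵥ x) • v j) = ∑ j ∈ s, (v j ⬝ᵥ x) ^ 2 := by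
    rw [h1]
    exact Finset.sum_congr rfl fun j _ => by ring
  have h4 : (∑ j ∈ s, (v j ⬝ᵥ x) • v j) ⬝ᵥ (∑ j ∈ s, (v j ⬝ᵥ x) • v j)
      = ∑ j ∈ s, (v j ⬝ᵥ x) ^ 2 := by
    rw [dotProduct_comm, h1]
    refine Finset.sum_congr rfl fun j hj => ?_
    have hinner : v j ⬝ᵥ ∑ i ∈ s, (v i ⬝ᵥ x) • v i = v j ⬝ᵥ x := by
      rw [dot_finset_sum]
      have : ∀ i ∈ s, (v j) ⬝ᵥ ((v i ⬝ᵥ x) • v i) = if j = i then v j ⬝ᵥ x else 0 := by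
        intro i _
        rw [dotProduct_smul, smul_eq_mul, hv j i]
        by_cases h : j = i <;> simp [h]
      rw [Finset.sum_congr rfl this, Finset.sum_ite_eq s j (fun _ => v j ⬝ᵥ x), if_pos hj]
    rw [hinner]; ring
  rw [sub_dotProduct, dotProduct_sub, dotProduct_sub, h2, h3, h4]
  ring

private lemma bessel (v : Fin p → Fin p → ℝ)
    (hv : ∀ i j, v i ⬝ᵥ v j = if i = j then (1:ℝ) else 0)
    (x : Fin p → ℝ) (s : Finset (Fin p)) :
    ∑ j ∈ s, (v j ⬝ᵥ x) ^ 2 ≤ x ⬝ᵥ x := by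
  have h := proj_residual v hv x s
  have h0 := dot_self_nonneg' (x - ∑ j ∈ s, (v j ⬝ᵥ x) • v j)
  rw [h] at h0
  linarith

private lemma quad_abs_le (E : Matrix (Fin p) (Fin p) ℝ) (x : Fin p → ℝ) :
    |x ⬝ᵥ E *ᵥ x| ≤ ‖E‖ * (x ⬝ᵥ x) := by
  set x' : EuclideanSpace ℝ (Fin p) := (EuclideanSpace.equiv (Fin p) ℝ).symm x with hx'
  set y' : EuclideanSpace ℝ (Fin p) := (EuclideanSpace.equiv (Fin p) ℝ).symm (E *ᵥ x) with hy'
  have hinner : x ⬝ᵥ E *ᵥ x = inner ℝ x' y' := by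
    simp [PiLp.inner_apply, dotProduct, RCLike.inner_apply, x', y', mul_comm]
  have hxx : x ⬝ᵥ x = ‖x'‖ ^ 2 := by
    have : (inner ℝ x' x' : ℝ) = ‖x'‖ ^ 2 := real_inner_self_eq_norm_sq x'
    rw [← this]
    rw [hx', PiLp.inner_apply]
    simp only [dotProduct, RCLike.inner_apply, EuclideanSpace.equiv, conj_trivial]
    rfl
  have h1 : |(inner ℝ x' y' : ℝ)| ≤ ‖x'‖ * ‖y'‖ := abs_real_inner_le_norm x' y'
  have h2 : ‖y'‖ ≤ ‖E‖ * ‖x'‖ := E.l2_opNorm_mulVec x'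
  calc |x ⬝ᵥ E *ᵥ x| = |(inner ℝ x' y' : ℝ)| := by rw [hinner]
    _ ≤ ‖x'‖ * ‖y'‖ := h1
    _ ≤ ‖x'‖ * (‖E‖ * ‖x'‖) := mul_le_mul_of_nonneg_left h2 (norm_nonneg _)
    _ = ‖E‖ * (x ⬝ᵥ x) := by rw [hxx]; ring

private lemma sum_extend {k : ℕ} (hkp : k + 1 ≤ p) (f : Fin p → ℝ)
    (hf : ∀ j : Fin p, k + 1 ≤ (j : ℕ) → f j = 0) :
    ∑ j, f j = ∑ i : Fin (k + 1), f (Fin.castLE hkp i) := by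
  have e1 : ∑ j : Fin p, f j = ∑ m ∈ Finset.range p,
      (fun m => if h : m < p then f ⟨m, h⟩ else 0) m := by
    rw [← Fin.sum_univ_eq_sum_range]
    exact Finset.sum_congr rfl fun j _ => by simp [j.isLt]
  have e2 : ∑ i : Fin (k + 1), f (Fin.castLE hkp i) = ∑ m ∈ Finset.range (k + 1),
      (fun m => if h : m < p then f ⟨m, h⟩ else 0) m := by
    rw [← Fin.sum_univ_eq_sum_range]
    refine Finset.sum_congr rfl fun i _ => ?_
    have hip : (i : ℕ) < p := lt_of_lt_of_le i.isLt hkp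
    simp only [hip, dif_pos]
    rfl
  rw [e1, e2]
  refine (Finset.sum_subset (Finset.range_subset_range.2 hkp) ?_).symm
  intro m hm hnot
  simp only [Finset.mem_range] at hm hnot
  by_cases h : m < p
  · simp only [dif_pos h]
    exact hf ⟨m, h⟩ (le_of_not_gt hnot)
  · simp [h]

private lemma exists_kernel_vec {k : ℕ} (M : Matrix (Fin k) (Fin (k + 1)) ℝ) :
    ∃ c : Fin (k + 1) → ℝ, c ≠ 0 ∧ M *ᵥ c = 0 := by
  have h : Module.finrank ℝ (Fin k → ℝ) < Module.finrank ℝ (Fin (k + 1) → ℝ) := by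
    simp [Module.finrank_pi]
  have hker := LinearMap.ker_ne_bot_of_finrank_lt (f := M.mulVecLin) h
  rw [Submodule.ne_bot_iff] at hker
  obtain ⟨c, hc, hc0⟩ := hker
  exact ⟨c, hc0, hc⟩

private lemma sum_ite_zero_eq_sum_compl (cond : Fin p → Prop) [DecidablePred cond]
    (f : Fin p → ℝ) :
    ∑ j, (if cond j then 0 else f j) = ∑ j ∈ (Finset.univ.filter cond)ᶜ, f j := by
  rw [Finset.sum_ite, Finset.sum_const_zero, zero_add, Finset.compl_filter]

end PcaAux

theorem pca_ols_bias_upper_bound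
    (n p k : ℕ) (hn : 0 < n) (hk : k < min n p)
    (X : Matrix (Fin n) (Fin p) ℝ) (β : Fin p → ℝ)
    (Cxx : Matrix (Fin p) (Fin p) ℝ)
    -- eigendecomposition of the population covariance, eigenvalues sorted decreasingly
    (lam : Fin p → ℝ) (u : Fin p → Fin p → ℝ)
    (hlam_anti : ∀ i j : Fin p, i ≤ j → lam j ≤ lam i)
    (hlam_nonneg : ∀ j, 0 ≤ lam j)
    (hu_orth : ∀ i j, u i ⬝ᵥ u j = if i = j then (1 : ℝ) else 0)
    (hCxx : Cxx = ∑ j, lam j • vecMulVec (u j) (u j))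
    -- eigendecomposition of the empirical covariance (1/n) XᵀX
    (lamt : Fin p → ℝ) (ut : Fin p → Fin p → ℝ)
    (hlamt_anti : ∀ i j : Fin p, i ≤ j → lamt j ≤ lamt i)
    (hut_orth : ∀ i j, ut i ⬝ᵥ ut j = if i = j then (1 : ℝ) else 0)
    (hemp : (1 / (n : ℝ)) • (Xᵀ * X) = ∑ j, lamt j • vecMulVec (ut j) (ut j))
    -- projection onto the orthogonal complement of the top-k empirical eigenspace
    (PikPerp E : Matrix (Fin p) (Fin p) ℝ)
    (hPerp : PikPerp = 1 - ∑ i ∈ Finset.univ.filter (fun i : Fin p => (i : ℕ) < k),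
        vecMulVec (ut i) (ut i))
    (hE : E = Cxx - (1 / (n : ℝ)) • (Xᵀ * X)) :
    β ⬝ᵥ ((PikPerp * Cxx * PikPerp) *ᵥ β)
      ≤ (∑ i, β i ^ 2) *
        (2 * ‖E‖ + lam ⟨k, Nat.lt_of_lt_of_le hk (Nat.min_le_right n p)⟩) := by
  classical
  have hkp : k < p := Nat.lt_of_lt_of_le hk (Nat.min_le_right n p)
  have hkp' : k + 1 ≤ p := hkp
  set kk : Fin p := ⟨k, hkp⟩ with hkk
  set Semp : Matrix (Fin p) (Fin p) ℝ := (1 / (n : ℝ)) • (Xᵀ * X) with hSemp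
  set s : Finset (Fin p) := Finset.univ.filter (fun i : Fin p => (i : ℕ) < k) with hs
  set w : Fin p → ℝ := β - ∑ j ∈ s, (ut j ⬝ᵥ β) • ut j with hw
  -- the projected vector
  have hQ : (∑ i ∈ s, vecMulVec (ut i) (ut i)) *ᵥ β = ∑ j ∈ s, (ut j ⬝ᵥ β) • ut j := by
    have h := sum_smul_vecMulVec_mulVec s (fun _ => (1 : ℝ)) ut β
    simpa using h
  have hPw : PikPerp *ᵥ β = w := by
    rw [hPerp, sub_mulVec, one_mulVec, hQ]
  -- symmetry of the projection
  have hPT : PikPerpᵀ = PikPerp := by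
    rw [hPerp]
    have h1 : (∑ i ∈ s, vecMulVec (ut i) (ut i))ᵀ = ∑ i ∈ s, vecMulVec (ut i) (ut i) := by
      rw [Matrix.transpose_sum]
      refine Finset.sum_congr rfl fun i _ => ?_
      ext a b
      simp [vecMulVec_apply, mul_comm]
    rw [Matrix.transpose_sub, Matrix.transpose_one, h1]
  -- rewrite the bias quadratic form
  have hB : β ⬝ᵥ ((PikPerp * Cxx * PikPerp) *ᵥ β) = w ⬝ᵥ Cxx *ᵥ w := by
    rw [← Matrix.mulVec_mulVec, ← Matrix.mulVec_mulVec, hPw, Matrix.dotProduct_mulVec]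
    have hvm : β ᵥ* PikPerp = w := by rw [← hPT, vecMul_transpose, hPw]
    rw [hvm]
  -- dot products of the empirical eigenvectors with w
  have hut_w : ∀ j, ut j ⬝ᵥ w = if (j : ℕ) < k then 0 else ut j ⬝ᵥ β := by
    intro j
    rw [hw, dotProduct_sub, dot_finset_sum]
    have hterm : ∀ i ∈ s, ut j ⬝ᵥ ((ut i ⬝ᵥ β) • ut i) = if j = i then ut j ⬝ᵥ β else 0 := by
      intro i _
      rw [dotProduct_smul, smul_eq_mul, hut_orth j i]
      by_cases h : j = i <;> simp [h]
    rw [Finset.sum_congr rfl hterm, Finset.sum_ite_eq s j (fun _ => ut j ⬝ᵥ β)]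
    have hmem : j ∈ s ↔ (j : ℕ) < k := by simp [hs]
    by_cases h : (j : ℕ) < k
    · simp [hmem.mpr h, h]
    · have hnotmem : j ∉ s := fun hh => h (hmem.mp hh)
      simp [hnotmem, h]
  -- split of the covariance
  have hCsplit : Cxx = Semp + E := by rw [hE, hSemp]; abel
  -- λ̃_k is nonnegative
  have hlamt_kk_nonneg : 0 ≤ lamt kk := by
    have hSel : ut kk ⬝ᵥ Semp *ᵥ ut kk = lamt kk := by
      rw [hemp, dot_spectral]
      have hterm : ∀ j ∈ Finset.univ, lamt j * (ut j ⬝ᵥ ut kk) ^ 2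
          = if j = kk then lamt j else 0 := by
        intro j _
        rw [hut_orth j kk]
        by_cases h : j = kk <;> simp [h]
      rw [Finset.sum_congr rfl hterm, Finset.sum_ite_eq' Finset.univ kk lamt,
        if_pos (Finset.mem_univ kk)]
    have hpos : 0 ≤ ut kk ⬝ᵥ Semp *ᵥ ut kk := by
      rw [hSemp, Matrix.smul_mulVec, dotProduct_smul, ← Matrix.mulVec_mulVec,
        Matrix.dotProduct_mulVec, vecMul_transpose]
      have : (0 : ℝ) ≤ (X *ᵥ ut kk) ⬝ᵥ (X *ᵥ ut kk) := dot_self_nonneg' _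
      have hn' : (0 : ℝ) ≤ 1 / (n : ℝ) := by positivity
      simpa using mul_nonneg hn' this
    linarith [hSel ▸ hpos]
  -- Weyl-type bound : lamt kk ≤ lam kk + ‖E‖
  have hWeyl : lamt kk ≤ lam kk + ‖E‖ := by
    set M : Matrix (Fin k) (Fin (k + 1)) ℝ :=
      Matrix.of (fun jj i => u ⟨jj, lt_trans jj.isLt hkp⟩ ⬝ᵥ ut (Fin.castLE hkp' i)) with hM
    obtain ⟨c, hc0, hMc⟩ := exists_kernel_vec M
    set d : Fin p → ℝ := fun j => if h : (j : ℕ) < k + 1 then c ⟨j, h⟩ else 0 with hd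
    set v : Fin p → ℝ := ∑ j, d j • ut j with hv
    have hd0 : ∀ j : Fin p, k + 1 ≤ (j : ℕ) → d j = 0 := fun j hj => dif_neg (not_lt.2 hj)
    have hdc : ∀ i : Fin (k + 1), d (Fin.castLE hkp' i) = c i := by
      intro i
      simp only [hd, Fin.coe_castLE, i.isLt, dif_pos]
    have hutv : ∀ j, ut j ⬝ᵥ v = d j := by
      intro j
      rw [hv, dot_finset_sum]
      have hterm : ∀ i ∈ Finset.univ, ut j ⬝ᵥ (d i • ut i) = if j = i then d i else 0 := by
        intro i _
        rw [dotProduct_smul, smul_eq_mul, hut_orth j i]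
        by_cases h : j = i <;> simp [h]
      rw [Finset.sum_congr rfl hterm, Finset.sum_ite_eq Finset.univ j d,
        if_pos (Finset.mem_univ j)]
    have hvv : v ⬝ᵥ v = ∑ j, d j ^ 2 := by
      rw [hv, finset_sum_dot]
      refine Finset.sum_congr rfl fun j _ => ?_
      rw [smul_dotProduct, smul_eq_mul]
      have : (∑ i, d i • ut i) = v := hv.symm
      rw [this, hutv j]
      ring
    have hD : 0 < ∑ j, d j ^ 2 := by
      have hex : ∃ i, c i ≠ 0 := by
        by_contra hcon
        push_neg at hcon
        exact hc0 (funext fun i => hcon i)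
      obtain ⟨i, hci⟩ := hex
      refine Finset.sum_pos' (fun j _ => sq_nonneg _) ⟨Fin.castLE hkp' i, Finset.mem_univ _, ?_⟩
      have : d (Fin.castLE hkp' i) ≠ 0 := by rw [hdc i]; exact hci
      rw [sq]
      exact mul_self_pos.mpr this
    have hkernel : ∀ j : Fin p, (j : ℕ) < k → u j ⬝ᵥ v = 0 := by
      intro j hj
      rw [hv, dot_finset_sum]
      have hterm : ∀ j' ∈ Finset.univ, u j ⬝ᵥ (d j' • ut j') = d j' * (u j ⬝ᵥ ut j') := by
        intro j' _
        rw [dotProduct_smul, smul_eq_mul]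
      rw [Finset.sum_congr rfl hterm,
        sum_extend hkp' (fun j' => d j' * (u j ⬝ᵥ ut j'))
          (fun j' hj' => by
            show d j' * (u j ⬝ᵥ ut j') = 0
            rw [hd0 j' hj', zero_mul])]
      have hrow : ∑ i : Fin (k + 1), (u j ⬝ᵥ ut (Fin.castLE hkp' i)) * c i = 0 :=
        congrFun hMc ⟨j, hj⟩
      rw [← hrow]
      exact Finset.sum_congr rfl fun i _ => by
        show d (Fin.castLE hkp' i) * (u j ⬝ᵥ ut (Fin.castLE hkp' i)) = _
        rw [hdc i]; ring
    -- quadratic forms of v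
    have hvS : v ⬝ᵥ Semp *ᵥ v = ∑ j, lamt j * d j ^ 2 := by
      rw [hemp, dot_spectral]
      exact Finset.sum_congr rfl fun j _ => by rw [hutv j]
    have hvS_lb : lamt kk * (∑ j, d j ^ 2) ≤ v ⬝ᵥ Semp *ᵥ v := by
      rw [hvS, Finset.mul_sum]
      refine Finset.sum_le_sum fun j _ => ?_
      by_cases hcase : (j : ℕ) < k + 1
      · have hle : j ≤ kk := by rw [Fin.le_def]; exact Nat.lt_succ_iff.mp hcase
        exact mul_le_mul_of_nonneg_right (hlamt_anti j kk hle) (sq_nonneg _)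
      · rw [hd0 j (le_of_not_gt hcase)]
        simp
    have hvC : v ⬝ᵥ Cxx *ᵥ v ≤ lam kk * (∑ j, d j ^ 2) := by
      rw [hCxx, dot_spectral]
      calc ∑ j, lam j * (u j ⬝ᵥ v) ^ 2
          ≤ ∑ j : Fin p, (if (j : ℕ) < k then 0 else lam kk * (u j ⬝ᵥ v) ^ 2) := by
            refine Finset.sum_le_sum fun j _ => ?_
            by_cases hj : (j : ℕ) < k
            · simp [hj, hkernel j hj]
            · simp only [hj, if_false]
              refine mul_le_mul_of_nonneg_right (hlam_anti kk j ?_) (sq_nonneg _)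
              rw [Fin.le_def]
              exact le_of_not_gt hj
        _ = ∑ j ∈ (Finset.univ.filter (fun j : Fin p => (j : ℕ) < k))ᶜ,
              lam kk * (u j ⬝ᵥ v) ^ 2 :=
            sum_ite_zero_eq_sum_compl _ _
        _ = lam kk * ∑ j ∈ (Finset.univ.filter (fun j : Fin p => (j : ℕ) < k))ᶜ,
              (u j ⬝ᵥ v) ^ 2 := by rw [Finset.mul_sum]
        _ ≤ lam kk * (v ⬝ᵥ v) :=
            mul_le_mul_of_nonneg_left (bessel u hu_orth v _) (hlam_nonneg kk)
        _ = lam kk * (∑ j, d j ^ 2) := by rw [hvv]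
    have hvE : -(‖E‖ * (∑ j, d j ^ 2)) ≤ v ⬝ᵥ E *ᵥ v := by
      have h1 := quad_abs_le E v
      have h2 := neg_abs_le (v ⬝ᵥ E *ᵥ v)
      rw [hvv] at h1
      linarith
    have hsplit : v ⬝ᵥ Semp *ᵥ v = v ⬝ᵥ Cxx *ᵥ v - v ⬝ᵥ E *ᵥ v := by
      rw [hCsplit, add_mulVec, dotProduct_add]
      ring
    have hfin : lamt kk * (∑ j, d j ^ 2) ≤ (lam kk + ‖E‖) * (∑ j, d j ^ 2) := by
      rw [hsplit] at hvS_lb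
      nlinarith
    exact le_of_mul_le_mul_right hfin hD
  -- now the main bound
  have hββ : β ⬝ᵥ β = ∑ i, β i ^ 2 := by
    simp [dotProduct, sq]
  have hββ_nonneg : 0 ≤ β ⬝ᵥ β := dot_self_nonneg' β
  have hwSw : w ⬝ᵥ Semp *ᵥ w ≤ lamt kk * (β ⬝ᵥ β) := by
    rw [hemp, dot_spectral]
    calc ∑ j, lamt j * (ut j ⬝ᵥ w) ^ 2
        ≤ ∑ j : Fin p, (if (j : ℕ) < k then 0 else lamt kk * (ut j ⬝ᵥ β) ^ 2) := by
          refine Finset.sum_le_sum fun j _ => ?_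
          rw [hut_w j]
          by_cases h : (j : ℕ) < k
          · simp [h]
          · simp only [h, if_false]
            refine mul_le_mul_of_nonneg_right (hlamt_anti kk j ?_) (sq_nonneg _)
            rw [Fin.le_def]
            exact le_of_not_gt h
      _ = ∑ j ∈ (Finset.univ.filter (fun j : Fin p => (j : ℕ) < k))ᶜ,
            lamt kk * (ut j ⬝ᵥ β) ^ 2 := sum_ite_zero_eq_sum_compl _ _
      _ = lamt kk * ∑ j ∈ (Finset.univ.filter (fun j : Fin p => (j : ℕ) < k))ᶜ,
            (ut j ⬝ᵥ β) ^ 2 := by rw [Finset.mul_sum]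
      _ ≤ lamt kk * (β ⬝ᵥ β) :=
          mul_le_mul_of_nonneg_left (bessel ut hut_orth β _) hlamt_kk_nonneg
  have hww : w ⬝ᵥ w ≤ β ⬝ᵥ β := by
    rw [hw, proj_residual ut hut_orth β s]
    have : 0 ≤ ∑ j ∈ s, (ut j ⬝ᵥ β) ^ 2 := Finset.sum_nonneg fun j _ => sq_nonneg _
    linarith
  have hwEw : w ⬝ᵥ E *ᵥ w ≤ ‖E‖ * (β ⬝ᵥ β) := by
    have h1 := quad_abs_le E w
    have h2 := le_abs_self (w ⬝ᵥ E *ᵥ w)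
    have h3 : ‖E‖ * (w ⬝ᵥ w) ≤ ‖E‖ * (β ⬝ᵥ β) :=
      mul_le_mul_of_nonneg_left hww (norm_nonneg _)
    linarith
  have hlamt_le : lamt kk * (β ⬝ᵥ β) ≤ (lam kk + ‖E‖) * (β ⬝ᵥ β) :=
    mul_le_mul_of_nonneg_right hWeyl hββ_nonneg
  have hsplit : w ⬝ᵥ Cxx *ᵥ w = w ⬝ᵥ Semp *ᵥ w + w ⬝ᵥ E *ᵥ w := by
    rw [hCsplit, add_mulVec, dotProduct_add]
  rw [hB, hsplit, ← hββ]
  have hgoal : lam ⟨k, Nat.lt_of_lt_of_le hk (Nat.min_le_right n p)⟩ = lam kk := rfl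
  rw [hgoal]
  nlinarith [norm_nonneg E]
end

section
/- Let X ∈ ℝ^{n×p} and let C_xx ∈ ℝ^{p×p} be symmetric positive semidefinite with eigenvalues λ₁ ≥ … ≥ λ_p ≥ 0. Let k < min(n,p), let X_{PCA,k} be the rank-k truncated SVD of X, and let E = C_xx − (1/n)XᵀX. If ‖E‖_op < λ_k, then tr(((1/n)X_{PCA,k}ᵀX_{PCA,k})^† C_xx) ≤ k λ₁ / (λ_k − ‖E‖_op); consequently the PCA-OLS variance V := (σ²/n)·tr(((1/n)X_{PCA,k}ᵀX_{PCA,k})^† C_xx) satisfies V ≤ (σ²/n)·kλ₁/(λ_k − ‖E‖_op). -/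
/- STATEMENT 4: Let X ∈ ℝ^{n×p}, C_xx symmetric PSD with eigenvalues λ₁ ≥ … ≥ λ_p ≥ 0.
Let k < min(n,p), X_{PCA,k} be the rank-k truncated SVD of X, E = C_xx − (1/n)XᵀX.
If ‖E‖_op < λ_k then tr(((1/n)X_{PCA,k}ᵀX_{PCA,k})^† C_xx) ≤ kλ₁/(λ_k − ‖E‖_op);
consequently V := (σ²/n)·tr(((1/n)X_{PCA,k}ᵀX_{PCA,k})^† C_xx) ≤ (σ²/n)·kλ₁/(λ_k − ‖E‖_op). -/

open Matrix
open scoped BigOperators Matrix.Norms.L2Operator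

namespace PCAaux

variable {p : ℕ}

lemma vecMulVec_mul_vecMulVec (a b c d : Fin p → ℝ) :
    vecMulVec a b * vecMulVec c d = (b ⬝ᵥ c) • vecMulVec a d := by
  ext i j
  simp only [Matrix.mul_apply, vecMulVec_apply, Matrix.smul_apply, smul_eq_mul, dotProduct,
    Finset.sum_mul]
  exact Finset.sum_congr rfl fun x _ => by ring

lemma vecMulVec_mulVec (a b v : Fin p → ℝ) :
    vecMulVec a b *ᵥ v = (b ⬝ᵥ v) • a := by
  ext i
  simp only [Matrix.mulVec, vecMulVec_apply, dotProduct, Pi.smul_apply, smul_eq_mul,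
    Finset.sum_mul]
  exact Finset.sum_congr rfl fun x _ => by ring

lemma dotProduct_sum' {ι : Type*} (s : Finset ι) (v : Fin p → ℝ) (f : ι → Fin p → ℝ) :
    v ⬝ᵥ (∑ j ∈ s, f j) = ∑ j ∈ s, v ⬝ᵥ f j := by
  simp only [dotProduct, Finset.sum_apply, Finset.mul_sum]
  exact Finset.sum_comm

lemma quad_form (s : Finset (Fin p)) (c : Fin p → ℝ) (w : Fin p → Fin p → ℝ) (v : Fin p → ℝ) :
    v ⬝ᵥ ((∑ j ∈ s, c j • vecMulVec (w j) (w j)) *ᵥ v) = ∑ j ∈ s, c j * (w j ⬝ᵥ v) ^ 2 := by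
  have hsum : (∑ j ∈ s, c j • vecMulVec (w j) (w j)) *ᵥ v
      = ∑ j ∈ s, (c j • vecMulVec (w j) (w j)) *ᵥ v := by
    ext i
    simp only [Matrix.mulVec, dotProduct, Finset.sum_apply, Matrix.sum_apply, Matrix.smul_apply,
      vecMulVec_apply, Finset.sum_mul, smul_eq_mul]
    rw [Finset.sum_comm]
  rw [hsum, dotProduct_sum']
  refine Finset.sum_congr rfl fun j _ => ?_
  rw [Matrix.smul_mulVec, vecMulVec_mulVec]
  rw [dotProduct_smul, dotProduct_smul, smul_eq_mul, smul_eq_mul, dotProduct_comm v (w j)]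
  ring

lemma parseval (w : Fin p → Fin p → ℝ)
    (horth : ∀ i j, w i ⬝ᵥ w j = if i = j then (1 : ℝ) else 0) (v : Fin p → ℝ) :
    ∑ j, (w j ⬝ᵥ v) ^ 2 = v ⬝ᵥ v := by
  set W : Matrix (Fin p) (Fin p) ℝ := Matrix.of w with hW
  have h1 : W * Wᵀ = 1 := by
    ext i j
    simpa [hW, Matrix.mul_apply, dotProduct, Matrix.one_apply] using horth i j
  have h2 : Wᵀ * W = 1 := mul_eq_one_comm.mp h1
  have hv : Wᵀ *ᵥ (W *ᵥ v) = v := by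
    rw [Matrix.mulVec_mulVec, h2, Matrix.one_mulVec]
  have key : (W *ᵥ v) ⬝ᵥ (W *ᵥ v) = v ⬝ᵥ v := by
    rw [Matrix.dotProduct_mulVec, Matrix.vecMul_mulVec, h2, Matrix.vecMul_one]
  rw [← key]
  simp only [dotProduct, Matrix.mulVec, pow_two]
  exact Finset.sum_congr rfl fun j _ => rfl

lemma mp_unique {m n : Type*} [Fintype m] [Fintype n] {A : Matrix m n ℝ} {P Q : Matrix n m ℝ}
    (hP : IsMoorePenrose A P) (hQ : IsMoorePenrose A Q) : P = Q := by
  obtain ⟨hP1, hP2, hP3, hP4⟩ := hP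
  obtain ⟨hQ1, hQ2, hQ3, hQ4⟩ := hQ
  have hap : A * P = A * Q := by
    calc A * P = (A * Q * A) * P := by rw [hQ1]
      _ = (A * Q) * (A * P) := by rw [Matrix.mul_assoc]
      _ = (A * Q)ᵀ * (A * P)ᵀ := by rw [hQ3, hP3]
      _ = Qᵀ * (A * P * A)ᵀ := by
          simp only [Matrix.transpose_mul, Matrix.mul_assoc]
      _ = Qᵀ * Aᵀ := by rw [hP1]
      _ = (A * Q)ᵀ := by rw [Matrix.transpose_mul]
      _ = A * Q := hQ3
  have hpa : P * A = Q * A := by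
    calc P * A = P * (A * Q * A) := by rw [hQ1]
      _ = (P * A) * (Q * A) := by simp only [Matrix.mul_assoc]
      _ = (P * A)ᵀ * (Q * A)ᵀ := by rw [hP4, hQ4]
      _ = (A * P * A)ᵀ * Qᵀ := by
          simp only [Matrix.transpose_mul, Matrix.mul_assoc]
      _ = Aᵀ * Qᵀ := by rw [hP1]
      _ = (Q * A)ᵀ := by rw [Matrix.transpose_mul]
      _ = Q * A := hQ4
  calc P = P * A * P := hP2.symm
    _ = Q * A * P := by rw [hpa]
    _ = Q * (A * P) := by rw [Matrix.mul_assoc]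
    _ = Q * (A * Q) := by rw [hap]
    _ = Q := by rw [← Matrix.mul_assoc, hQ2]

end PCAaux

namespace PCAaux

variable {p : ℕ}

lemma transpose_vecMulVec (a b : Fin p → ℝ) : (vecMulVec a b)ᵀ = vecMulVec b a := by
  ext i j; simp [vecMulVec_apply, mul_comm]

lemma sum_proj_mul (w : Fin p → Fin p → ℝ)
    (horth : ∀ i j, w i ⬝ᵥ w j = if i = j then (1 : ℝ) else 0)
    (s t : Finset (Fin p)) (a b : Fin p → ℝ) :
    (∑ i ∈ s, a i • vecMulVec (w i) (w i)) * (∑ j ∈ t, b j • vecMulVec (w j) (w j))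
      = ∑ i ∈ s ∩ t, (a i * b i) • vecMulVec (w i) (w i) := by
  rw [Finset.sum_mul_sum]
  have step : ∀ i ∈ s, ∑ j ∈ t, (a i • vecMulVec (w i) (w i)) * (b j • vecMulVec (w j) (w j))
      = if i ∈ t then (a i * b i) • vecMulVec (w i) (w i) else 0 := by
    intro i _
    rw [← Finset.sum_ite_eq t i (fun j => (a i * b i) • vecMulVec (w i) (w i))]
    refine Finset.sum_congr rfl fun j _ => ?_
    rw [Matrix.smul_mul, Matrix.mul_smul, vecMulVec_mul_vecMulVec, horth i j]
    by_cases hij : i = j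
    · subst hij; simp [smul_smul]
    · simp [hij]
  rw [Finset.sum_congr rfl step, Finset.sum_ite_mem]

lemma trace_vecMulVec_mul (a b : Fin p → ℝ) (M : Matrix (Fin p) (Fin p) ℝ) :
    Matrix.trace (vecMulVec a b * M) = b ⬝ᵥ (M *ᵥ a) := by
  simp only [Matrix.trace, Matrix.diag_apply, Matrix.mul_apply, vecMulVec_apply, dotProduct,
    Matrix.mulVec, Finset.mul_sum]
  rw [Finset.sum_comm]
  exact Finset.sum_congr rfl fun i _ => Finset.sum_congr rfl fun j _ => by ring

lemma exists_ne_zero_forall_dotProduct_eq_zero {ι : Type*} [Fintype ι]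
    (hcard : Fintype.card ι < p) (g : ι → (Fin p → ℝ)) :
    ∃ v : Fin p → ℝ, v ≠ 0 ∧ ∀ j, g j ⬝ᵥ v = 0 := by
  let f : (Fin p → ℝ) →ₗ[ℝ] (ι → ℝ) :=
    { toFun := fun v j => g j ⬝ᵥ v
      map_add' := by intro x y; funext j; simp [dotProduct_add]
      map_smul' := by intro c x; funext j; simp [dotProduct_smul] }
  by_contra h
  push_neg at h
  have hinj : Function.Injective f := by
    rw [← LinearMap.ker_eq_bot, Submodule.eq_bot_iff]
    intro v hv
    rw [LinearMap.mem_ker] at hv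
    by_contra hv0
    obtain ⟨j, hj⟩ := h v hv0
    exact hj (congrFun hv j)
  have hle := LinearMap.finrank_le_finrank_of_injective hinj
  rw [Module.finrank_pi, Module.finrank_pi, Fintype.card_fin] at hle
  omega

end PCAaux

open PCAaux

theorem pca_ols_variance_upper_bound
    (n p k : ℕ) (hn : 0 < n) (hk0 : 0 < k) (hk : k < min n p)
    (X : Matrix (Fin n) (Fin p) ℝ)
    (Cxx : Matrix (Fin p) (Fin p) ℝ)
    (σ : ℝ) (hσ : 0 < σ)
    -- eigendecomposition of the population covariance, eigenvalues sorted decreasingly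
    (lam : Fin p → ℝ) (u : Fin p → Fin p → ℝ)
    (hlam_anti : ∀ i j : Fin p, i ≤ j → lam j ≤ lam i)
    (hlam_nonneg : ∀ j, 0 ≤ lam j)
    (hu_orth : ∀ i j, u i ⬝ᵥ u j = if i = j then (1 : ℝ) else 0)
    (hCxx : Cxx = ∑ j, lam j • vecMulVec (u j) (u j))
    -- eigendecomposition of the empirical covariance (1/n) XᵀX
    (lamt : Fin p → ℝ) (ut : Fin p → Fin p → ℝ)
    (hlamt_anti : ∀ i j : Fin p, i ≤ j → lamt j ≤ lamt i)
    (hut_orth : ∀ i j, ut i ⬝ᵥ ut j = if i = j then (1 : ℝ) else 0)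
    (hemp : (1 / (n : ℝ)) • (Xᵀ * X) = ∑ j, lamt j • vecMulVec (ut j) (ut j))
    -- the rank-k truncated SVD of X and the pseudoinverse of (1/n) X_{PCA,k}ᵀ X_{PCA,k}
    (Xk : Matrix (Fin n) (Fin p) ℝ)
    (hXk : (1 / (n : ℝ)) • (Xkᵀ * Xk)
      = ∑ i ∈ Finset.univ.filter (fun i : Fin p => (i : ℕ) < k), lamt i • vecMulVec (ut i) (ut i))
    (Bdag : Matrix (Fin p) (Fin p) ℝ)
    (hBdag : IsMoorePenrose ((1 / (n : ℝ)) • (Xkᵀ * Xk)) Bdag)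
    -- the perturbation and the spectral condition
    (E : Matrix (Fin p) (Fin p) ℝ)
    (hE : E = Cxx - (1 / (n : ℝ)) • (Xᵀ * X))
    (hEk : ‖E‖ < lam ⟨k - 1, by omega⟩) :
    Matrix.trace (Bdag * Cxx)
        ≤ (k : ℝ) * lam ⟨0, by omega⟩ / (lam ⟨k - 1, by omega⟩ - ‖E‖) ∧
      (σ ^ 2 / (n : ℝ)) * Matrix.trace (Bdag * Cxx)
        ≤ (σ ^ 2 / (n : ℝ)) * ((k : ℝ) * lam ⟨0, by omega⟩ / (lam ⟨k - 1, by omega⟩ - ‖E‖)) := by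
  classical
  have hkp : k < p := lt_of_lt_of_le hk (min_le_right n p)
  have hh1 : k - 1 < p := by omega
  have hh0 : 0 < p := by omega
  set κ : Fin p := ⟨k - 1, hh1⟩ with hκdef
  have hEκ : ‖E‖ < lam κ := hEk
  have hδpos : 0 < lam κ - ‖E‖ := sub_pos.mpr hEκ
  set S : Finset (Fin p) := Finset.univ.filter (fun i : Fin p => (i : ℕ) < k) with hSdef
  -- Weyl-type lower bound on lamt κ
  obtain ⟨v, hv0, hvker⟩ :=
    exists_ne_zero_forall_dotProduct_eq_zero (ι := {j : Fin p // j ≠ κ})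
      (by
        have hcc : Fintype.card {j : Fin p // ¬ j = κ} = p - 1 := by
          rw [Fintype.card_subtype_compl, Fintype.card_subtype_eq, Fintype.card_fin]
        calc Fintype.card {j : Fin p // j ≠ κ} = p - 1 := hcc
          _ < p := by omega)
      (fun j => if ((j.1 : ℕ)) < k then ut j.1 else u j.1)
  have hv_ut : ∀ j : Fin p, (j : ℕ) < k - 1 → ut j ⬝ᵥ v = 0 := by
    intro j hj
    have hne : j ≠ κ := Fin.ne_of_val_ne (by simp only [hκdef]; omega)
    have h := hvker ⟨j, hne⟩
    simpa [show (j : ℕ) < k by omega] using h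
  have hv_u : ∀ j : Fin p, k ≤ (j : ℕ) → u j ⬝ᵥ v = 0 := by
    intro j hj
    have hne : j ≠ κ := Fin.ne_of_val_ne (by simp only [hκdef]; omega)
    have h := hvker ⟨j, hne⟩
    simpa [show ¬((j : ℕ) < k) by omega] using h
  have hvv : 0 < v ⬝ᵥ v := by
    have h0 : v ⬝ᵥ v ≠ 0 := fun h => hv0 (dotProduct_self_eq_zero.mp h)
    have hnn : 0 ≤ v ⬝ᵥ v := Finset.sum_nonneg fun i _ => mul_self_nonneg _
    exact lt_of_le_of_ne hnn (Ne.symm h0)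
  have h1 : lam κ * (v ⬝ᵥ v) ≤ v ⬝ᵥ (Cxx *ᵥ v) := by
    conv_lhs => rw [← parseval u hu_orth v]
    rw [hCxx, quad_form, Finset.mul_sum]
    refine Finset.sum_le_sum fun j _ => ?_
    by_cases hj : (j : ℕ) < k
    · refine mul_le_mul_of_nonneg_right (hlam_anti j κ ?_) (sq_nonneg _)
      rw [Fin.le_def]
      show (j : ℕ) ≤ k - 1
      omega
    · rw [hv_u j (le_of_not_gt hj)]
      simp
  have h2 : v ⬝ᵥ (((1 / (n : ℝ)) • (Xᵀ * X)) *ᵥ v) ≤ lamt κ * (v ⬝ᵥ v) := by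
    conv_rhs => rw [← parseval ut hut_orth v]
    rw [hemp, quad_form, Finset.mul_sum]
    refine Finset.sum_le_sum fun j _ => ?_
    by_cases hj : (j : ℕ) < k - 1
    · rw [hv_ut j hj]
      simp
    · refine mul_le_mul_of_nonneg_right (hlamt_anti κ j ?_) (sq_nonneg _)
      rw [Fin.le_def]
      show k - 1 ≤ (j : ℕ)
      omega
  have h3 : v ⬝ᵥ (E *ᵥ v) ≤ ‖E‖ * (v ⬝ᵥ v) := by
    set x : EuclideanSpace ℝ (Fin p) := (EuclideanSpace.equiv (Fin p) ℝ).symm v with hxdef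
    have hx : ∀ w : Fin p → ℝ,
        v ⬝ᵥ w = @inner ℝ _ _ x ((EuclideanSpace.equiv (Fin p) ℝ).symm w) := by
      intro w
      simp [PiLp.inner_apply, RCLike.inner_apply, dotProduct, hxdef]
      exact Finset.sum_congr rfl fun i _ => mul_comm _ _
    have hnorm : ‖x‖ * ‖x‖ = v ⬝ᵥ v := by
      rw [← real_inner_self_eq_norm_mul_norm]
      exact (hx v).symm
    calc v ⬝ᵥ (E *ᵥ v)
        = @inner ℝ _ _ x ((EuclideanSpace.equiv (Fin p) ℝ).symm (E *ᵥ v)) := hx _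
      _ ≤ ‖x‖ * ‖(EuclideanSpace.equiv (Fin p) ℝ).symm (E *ᵥ v)‖ := real_inner_le_norm _ _
      _ ≤ ‖x‖ * (‖E‖ * ‖x‖) := by
          refine mul_le_mul_of_nonneg_left ?_ (norm_nonneg _)
          exact E.l2_opNorm_mulVec x
      _ = ‖E‖ * (v ⬝ᵥ v) := by rw [← hnorm]; ring
  have hsplit : v ⬝ᵥ (Cxx *ᵥ v)
      = v ⬝ᵥ (E *ᵥ v) + v ⬝ᵥ (((1 / (n : ℝ)) • (Xᵀ * X)) *ᵥ v) := by
    have hC : Cxx = E + (1 / (n : ℝ)) • (Xᵀ * X) := by rw [hE, sub_add_cancel]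
    rw [hC, Matrix.add_mulVec, dotProduct_add]
  have hweyl : lam κ - ‖E‖ ≤ lamt κ := by nlinarith [h1, h2, h3, hsplit, hvv]
  have hlamt_lb : ∀ i ∈ S, lam κ - ‖E‖ ≤ lamt i := by
    intro i hi
    have hik : (i : ℕ) < k := by
      rw [hSdef, Finset.mem_filter] at hi
      exact hi.2
    refine le_trans hweyl (hlamt_anti i κ ?_)
    rw [Fin.le_def]
    show (i : ℕ) ≤ k - 1
    omega
  have hlamt_pos : ∀ i ∈ S, 0 < lamt i := fun i hi => lt_of_lt_of_le hδpos (hlamt_lb i hi)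
  have hlamt_ne : ∀ i ∈ S, lamt i ≠ 0 := fun i hi => ne_of_gt (hlamt_pos i hi)
  -- identify Bdag
  have hMP : IsMoorePenrose ((1 / (n : ℝ)) • (Xkᵀ * Xk))
      (∑ i ∈ S, (lamt i)⁻¹ • vecMulVec (ut i) (ut i)) := by
    rw [hXk]
    refine ⟨?_, ?_, ?_, ?_⟩
    · rw [sum_proj_mul ut hut_orth, Finset.inter_self, sum_proj_mul ut hut_orth,
        Finset.inter_self]
      refine Finset.sum_congr rfl fun i hi => ?_
      rw [mul_inv_cancel₀ (hlamt_ne i hi), one_mul]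
    · rw [sum_proj_mul ut hut_orth, Finset.inter_self, sum_proj_mul ut hut_orth,
        Finset.inter_self]
      refine Finset.sum_congr rfl fun i hi => ?_
      rw [inv_mul_cancel₀ (hlamt_ne i hi), one_mul]
    · rw [sum_proj_mul ut hut_orth, Finset.inter_self]
      simp [Matrix.transpose_sum, Matrix.transpose_smul, PCAaux.transpose_vecMulVec]
    · rw [sum_proj_mul ut hut_orth, Finset.inter_self]
      simp [Matrix.transpose_sum, Matrix.transpose_smul, PCAaux.transpose_vecMulVec]
  have hBdagP : Bdag = ∑ i ∈ S, (lamt i)⁻¹ • vecMulVec (ut i) (ut i) :=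
    mp_unique hBdag hMP
  -- trace computation
  have htr : Matrix.trace (Bdag * Cxx)
      = ∑ i ∈ S, (lamt i)⁻¹ * (ut i ⬝ᵥ (Cxx *ᵥ ut i)) := by
    rw [hBdagP, Finset.sum_mul, Matrix.trace_sum]
    refine Finset.sum_congr rfl fun i _ => ?_
    rw [Matrix.smul_mul, Matrix.trace_smul, trace_vecMulVec_mul, smul_eq_mul]
  have hquad : ∀ i : Fin p, ut i ⬝ᵥ (Cxx *ᵥ ut i) ≤ lam ⟨0, hh0⟩ := by
    intro i
    rw [hCxx, quad_form]
    have hpar : ∑ j, (u j ⬝ᵥ ut i) ^ 2 = 1 := by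
      rw [parseval u hu_orth (ut i)]
      simpa using hut_orth i i
    calc ∑ j, lam j * (u j ⬝ᵥ ut i) ^ 2
        ≤ ∑ j, lam ⟨0, hh0⟩ * (u j ⬝ᵥ ut i) ^ 2 := by
          refine Finset.sum_le_sum fun j _ => ?_
          refine mul_le_mul_of_nonneg_right (hlam_anti ⟨0, hh0⟩ j ?_) (sq_nonneg _)
          rw [Fin.le_def]
          exact Nat.zero_le _
      _ = lam ⟨0, hh0⟩ := by rw [← Finset.mul_sum, hpar, mul_one]
  have hScard : S.card = k := by
    have hSeq : S = Finset.map (Fin.castLEEmb hkp.le) Finset.univ := by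
      ext i
      rw [hSdef]
      simp only [Finset.mem_filter, Finset.mem_univ, true_and, Finset.mem_map,
        Fin.castLEEmb_apply]
      constructor
      · intro hi
        exact ⟨⟨(i : ℕ), hi⟩, by ext; simp⟩
      · rintro ⟨j, rfl⟩
        simpa using j.isLt
    rw [hSeq, Finset.card_map, Finset.card_univ, Fintype.card_fin]
  have main : Matrix.trace (Bdag * Cxx)
      ≤ (k : ℝ) * lam ⟨0, hh0⟩ / (lam κ - ‖E‖) := by
    rw [htr]
    have hbound : ∀ i ∈ S, (lamt i)⁻¹ * (ut i ⬝ᵥ (Cxx *ᵥ ut i))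
        ≤ (lam κ - ‖E‖)⁻¹ * lam ⟨0, hh0⟩ := by
      intro i hi
      have h5 : (lamt i)⁻¹ ≤ (lam κ - ‖E‖)⁻¹ := inv_anti₀ hδpos (hlamt_lb i hi)
      calc (lamt i)⁻¹ * (ut i ⬝ᵥ (Cxx *ᵥ ut i))
          ≤ (lamt i)⁻¹ * lam ⟨0, hh0⟩ :=
            mul_le_mul_of_nonneg_left (hquad i) (inv_nonneg.mpr (hlamt_pos i hi).le)
        _ ≤ (lam κ - ‖E‖)⁻¹ * lam ⟨0, hh0⟩ :=
            mul_le_mul_of_nonneg_right h5 (hlam_nonneg _)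
    calc ∑ i ∈ S, (lamt i)⁻¹ * (ut i ⬝ᵥ (Cxx *ᵥ ut i))
        ≤ S.card • ((lam κ - ‖E‖)⁻¹ * lam ⟨0, hh0⟩) := Finset.sum_le_card_nsmul _ _ _ hbound
      _ = (k : ℝ) * lam ⟨0, hh0⟩ / (lam κ - ‖E‖) := by
          rw [hScard, nsmul_eq_mul, div_eq_mul_inv]
          ring
  exact ⟨main, mul_le_mul_of_nonneg_left main (by positivity)⟩
end
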